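/- arXiv:0904.4179 — 7 statements merged into one kernel-verified Lean document; each statement's English description precedes it below -/
import Mathlib

section
/- Let r > 0, ε > 0 and δ > 0 with δ < ε·r. Then there is no continuous function f : D(0,r) → ℂ on the open disk D(0,r) of radius r centered at 0 such that |f(ζ)² − ε·ζ| < δ for all ζ ∈ D(0,r). -/
open Metric

/-- No continuous approximate square root of `ε·ζ` on the disk `D(0,r)` when `δ < ε·r`. -/
theorem no_continuous_approx_sqrt (r ε δ : ℝ) (hr : 0 < r) (hε : 0 < ε) (hδ : 0 < δ)
    (hδεr : δ < ε * r) :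
    ¬ ∃ f : ℂ → ℂ, ContinuousOn f (ball (0 : ℂ) r) ∧
      ∀ ζ ∈ ball (0 : ℂ) r, ‖(f ζ) ^ 2 - ε * ζ‖ < δ := by
  rintro ⟨f, hfc, hf⟩
  set ρ : ℝ := (δ / ε + r) / 2 with hρdef
  have hδε : δ / ε < r := (div_lt_iff₀ hε).2 (by linarith [mul_comm ε r])
  have hδε0 : 0 < δ / ε := div_pos hδ hε
  have hρ0 : 0 < ρ := by positivity
  have hρr : ρ < r := by simp only [hρdef]; linarith
  have hδρ : δ < ε * ρ := by
    have : δ / ε < ρ := by simp only [hρdef]; linarith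
    calc δ = ε * (δ / ε) := by field_simp
    _ < ε * ρ := by exact (mul_lt_mul_iff_right₀ hε).2 this
  -- points on the circle of radius ρ are in the ball
  have hmem : ∀ ζ : ℂ, ‖ζ‖ = ρ → ζ ∈ ball (0 : ℂ) r := by
    intro ζ hζ
    rw [mem_ball_zero_iff]
    simpa [hζ] using hρr
  -- f doesn't vanish on the circle
  have hne : ∀ ζ : ℂ, ‖ζ‖ = ρ → f ζ ≠ 0 := by
    intro ζ hζ hf0
    have := hf ζ (hmem ζ hζ)
    rw [hf0] at this
    simp only [zero_pow, ne_eq, OfNat.ofNat_ne_zero, not_false_eq_true, zero_sub, norm_neg,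
      norm_mul, Complex.norm_real, Real.norm_eq_abs, hζ, abs_of_pos hε] at this
    linarith
  -- key: Im (f ζ / f (-ζ)) ≠ 0 on the circle
  have him : ∀ ζ : ℂ, ‖ζ‖ = ρ → (f ζ / f (-ζ)).im ≠ 0 := by
    intro ζ hζ him0
    have hζ' : ‖-ζ‖ = ρ := by simpa using hζ
    have ha := hf ζ (hmem ζ hζ)
    have hb := hf (-ζ) (hmem (-ζ) hζ')
    have hbne : f (-ζ) ≠ 0 := hne (-ζ) hζ'
    set g : ℂ := f ζ / f (-ζ) with hg
    have hgr : g = ((g.re : ℝ) : ℂ) := by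
      apply Complex.ext <;> simp [him0]
    set t : ℝ := g.re ^ 2 with htdef
    have ht : 0 ≤ t := sq_nonneg _
    have hab : (f ζ) ^ 2 = (t : ℂ) * (f (-ζ)) ^ 2 := by
      have : f ζ = g * f (-ζ) := by rw [hg]; field_simp
      rw [this, hgr]
      ring_nf
      norm_cast
      rw [htdef]; ring
    -- |(1+t) ε ζ| ≤ |εζ - fζ²| + t |f(-ζ)² + εζ| < (1+t) δ
    have hkey : ((1 : ℝ) + t) * (ε * ρ) < (1 + t) * δ := by
      have e1 : ((1 + t : ℝ) : ℂ) * ((ε : ℂ) * ζ)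
          = ((ε : ℂ) * ζ - (f ζ)^2) + (t : ℂ) * ((f (-ζ))^2 - (ε : ℂ) * (-ζ)) := by
        rw [hab]; push_cast; ring
      have e2 : ‖((1 + t : ℝ) : ℂ) * ((ε : ℂ) * ζ)‖ = (1 + t) * (ε * ρ) := by
        rw [norm_mul, norm_mul, Complex.norm_real, Complex.norm_real, hζ, Real.norm_eq_abs, Real.norm_eq_abs,
          abs_of_nonneg (by linarith : (0:ℝ) ≤ 1 + t), abs_of_pos hε]
      calc (1 + t) * (ε * ρ) = ‖((1 + t : ℝ) : ℂ) * ((ε : ℂ) * ζ)‖ := e2.symm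
      _ ≤ ‖(ε : ℂ) * ζ - (f ζ)^2‖
            + ‖(t : ℂ) * ((f (-ζ))^2 - (ε : ℂ) * (-ζ))‖ := by
          rw [e1]; exact norm_add_le _ _
      _ = ‖(f ζ)^2 - (ε : ℂ) * ζ‖
            + t * ‖(f (-ζ))^2 - (ε : ℂ) * (-ζ)‖ := by
          rw [norm_sub_rev ((ε : ℂ) * ζ) ((f ζ)^2), norm_mul, Complex.norm_real, Real.norm_eq_abs,
            abs_of_nonneg ht]
      _ < δ + t * δ := by
          have : t * ‖(f (-ζ))^2 - (ε : ℂ) * (-ζ)‖ ≤ t * δ :=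
            mul_le_mul_of_nonneg_left (le_of_lt hb) ht
          rcases eq_or_lt_of_le ht with h0 | h0
          · rw [← h0] at this ⊢
            simpa using ha
          · have : t * ‖(f (-ζ))^2 - (ε : ℂ) * (-ζ)‖ < t * δ :=
              (mul_lt_mul_iff_right₀ h0).2 hb
            linarith
      _ = (1 + t) * δ := by ring
    have h1t : (0:ℝ) < 1 + t := by linarith
    have : ε * ρ < δ := lt_of_mul_lt_mul_left hkey (le_of_lt h1t)
    linarith
  -- the half-circle path
  set c : ℝ → ℂ := fun s => (ρ : ℂ) * Complex.exp ((Real.pi * s : ℝ) * Complex.I) with hc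
  have habs : ∀ s : ℝ, ‖c s‖ = ρ := by
    intro s
    simp [hc, Complex.norm_exp, abs_of_pos hρ0]
  have hc0 : c 0 = (ρ : ℂ) := by simp [hc]
  have hc1 : c 1 = -(ρ : ℂ) := by
    simp only [hc, mul_one]
    rw [Complex.exp_pi_mul_I]
    ring
  set h : ℝ → ℝ := fun s => (f (c s) / f (-c s)).im with hh
  have hcont : Continuous c := by
    apply continuous_const.mul
    exact Complex.continuous_exp.comp (by continuity)
  have hhc : ContinuousOn h (Set.Icc 0 1) := by
    apply Complex.continuous_im.comp_continuousOn
    apply ContinuousOn.div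
    · exact hfc.comp hcont.continuousOn (fun s _ => hmem (c s) (habs s))
    · apply hfc.comp (hcont.neg).continuousOn
      intro s _
      exact hmem (-c s) (by simpa using habs s)
    · intro s _
      exact hne (-c s) (by simpa using habs s)
  -- opposite signs at endpoints
  have hρc : ‖(ρ : ℂ)‖ = ρ := by simp [abs_of_pos hρ0]
  have hne1 : f ((ρ:ℂ)) ≠ 0 := hne _ hρc
  have hne2 : f (-(ρ:ℂ)) ≠ 0 := hne _ (by simpa using hρc)
  have hinv : f (-(ρ:ℂ)) / f ((ρ:ℂ)) = (f ((ρ:ℂ)) / f (-(ρ:ℂ)))⁻¹ := by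
    field_simp
  have hh0 : h 0 = (f ((ρ:ℂ)) / f (-(ρ:ℂ))).im := by simp [hh, hc0]
  have hh1 : h 1 = -(f ((ρ:ℂ)) / f (-(ρ:ℂ))).im
      / Complex.normSq (f ((ρ:ℂ)) / f (-(ρ:ℂ))) := by
    simp only [hh, hc1, neg_neg, hinv]
    rw [Complex.inv_im]
  have hg0 : (f ((ρ:ℂ)) / f (-(ρ:ℂ))).im ≠ 0 := him _ hρc
  have hnsq : 0 < Complex.normSq (f ((ρ:ℂ)) / f (-(ρ:ℂ))) := by
    apply Complex.normSq_pos.2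
    exact div_ne_zero hne1 hne2
  -- 0 strictly between h 0 and h 1
  have hzero : (0:ℝ) ∈ Set.uIcc (h 0) (h 1) := by
    rw [hh0, hh1]
    rcases lt_or_gt_of_ne hg0 with hlt | hgt
    · apply Set.mem_uIcc.2
      left
      exact ⟨by linarith, div_nonneg (by linarith) hnsq.le⟩
    · apply Set.mem_uIcc.2
      right
      exact ⟨div_nonpos_of_nonpos_of_nonneg (by linarith) hnsq.le, by linarith⟩
  have := intermediate_value_uIcc (a := (0:ℝ)) (b := 1)
    (by simpa [Set.uIcc_of_le (zero_le_one)] using hhc)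
  rw [Set.uIcc_of_le (zero_le_one)] at this
  obtain ⟨s, _, hs⟩ := this hzero
  exact him (c s) (habs s) hs
end

section
/- For any x ∈ ℂ, log max(|x|, 1) = (1/2π) ∫₀^{2π} log |x − e^{iθ}| dθ. -/
open Real MeasureTheory intervalIntegral

noncomputable def Complex.abs : AbsoluteValue ℂ ℝ := NormedField.toAbsoluteValue ℂ

theorem Complex.norm_eq_abs (z : ℂ) : ‖z‖ = Complex.abs z := rfl

theorem Complex.abs_apply (z : ℂ) : Complex.abs z = Real.sqrt (Complex.normSq z) :=
  Complex.norm_def z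

@[simp] theorem Complex.abs_ofReal (r : ℝ) : Complex.abs (r : ℂ) = |r| := Complex.norm_real r

theorem Complex.abs_exp (z : ℂ) : Complex.abs (Complex.exp z) = Real.exp z.re := Complex.norm_exp z

theorem Complex.abs_re_le_abs (z : ℂ) : |z.re| ≤ Complex.abs z := Complex.abs_re_le_norm z

theorem Complex.sq_abs (z : ℂ) : Complex.abs z ^ 2 = Complex.normSq z := Complex.sq_norm z

@[simp] theorem Complex.abs_conj (z : ℂ) : Complex.abs ((starRingEnd ℂ) z) = Complex.abs z :=
  Complex.norm_conj z

theorem Complex.continuous_abs : Continuous Complex.abs := continuous_norm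

@[simp] theorem Complex.abs_exp_ofReal_mul_I (x : ℝ) :
    Complex.abs (Complex.exp (x * Complex.I)) = 1 := Complex.norm_exp_ofReal_mul_I x

lemma contA (a : ℂ) :
    Continuous (fun θ : ℝ => 1 - a * Complex.exp (θ * Complex.I)) := by
  fun_prop

lemma slitA (a : ℂ) (ha : Complex.abs a < 1) :
    ∀ z : ℂ, Complex.abs z ≤ 1 → (1 - a * z) ∈ Complex.slitPlane := by
  intro z hz
  left
  have h1 : Complex.abs (a * z) < 1 := by
    rw [map_mul]
    calc Complex.abs a * Complex.abs z ≤ Complex.abs a * 1 :=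
      mul_le_mul_of_nonneg_left hz (Complex.abs.nonneg a)
    _ < 1 := by simpa using ha
  have h2 := abs_lt.1 (lt_of_le_of_lt (Complex.abs_re_le_abs (a * z)) h1)
  rw [Complex.sub_re, Complex.one_re]
  linarith [h2.2]

lemma contA' (a : ℂ) (ha : Complex.abs a < 1) :
    Continuous (fun θ : ℝ => Complex.log (1 - a * Complex.exp (θ * Complex.I))) := by
  rw [continuous_iff_continuousAt]
  intro θ
  exact (contA a).continuousAt.clog (slitA a ha _ (by rw [Complex.abs_exp]; simp))

lemma lemA (a : ℂ) (ha : Complex.abs a < 1) :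
    ∫ θ in (0:ℝ)..(2*π), Real.log (Complex.abs (1 - a * Complex.exp (θ * Complex.I))) = 0 := by
  set F : ℂ → ℂ := fun z => Complex.log (1 - a * z) with hF
  have hdiff : ∀ z ∈ Metric.closedBall (0:ℂ) 1, DifferentiableAt ℂ F z := by
    intro z hz
    simp only [Metric.mem_closedBall, dist_zero_right] at hz
    have hz' : DifferentiableAt ℂ (fun z : ℂ => 1 - a * z) z := by fun_prop
    exact (Complex.differentiableAt_log (slitA a ha z hz)).comp z hz'
  have hd : DiffContOnCl ℂ F (Metric.ball 0 1) := by
    constructor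
    · exact fun z hz => (hdiff z (Metric.ball_subset_closedBall hz)).differentiableWithinAt
    · rw [closure_ball (0:ℂ) one_ne_zero]
      exact fun z hz => (hdiff z hz).continuousAt.continuousWithinAt
  have hC := hd.circleIntegral_sub_inv_smul (w := 0) (by simp)
  have hF0 : F 0 = 0 := by simp [hF]
  rw [hF0, smul_zero] at hC
  rw [circleIntegral] at hC
  have key : ∀ θ : ℝ, (deriv (circleMap 0 1) θ) • ((circleMap 0 1 θ - 0)⁻¹ • F (circleMap 0 1 θ))
      = Complex.I * F (Complex.exp (θ * Complex.I)) := by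
    intro θ
    rw [deriv_circleMap]
    have hne : circleMap 0 1 θ ≠ 0 := circleMap_ne_center one_ne_zero
    have hcm : circleMap 0 1 θ = Complex.exp (θ * Complex.I) := by
      simp [circleMap]
    rw [sub_zero]
    rw [hcm, smul_eq_mul, smul_eq_mul, mul_comm (Complex.exp (θ * Complex.I)) Complex.I, mul_assoc,
      ← mul_assoc (Complex.exp (θ * Complex.I)), mul_inv_cancel₀ (Complex.exp_ne_zero _), one_mul]
  simp_rw [key] at hC
  have hint : IntervalIntegrable (fun θ : ℝ => F (Complex.exp (θ * Complex.I)))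
      MeasureTheory.volume 0 (2*π) := (contA' a ha).intervalIntegrable _ _
  rw [intervalIntegral.integral_const_mul] at hC
  have hI : (∫ θ in (0:ℝ)..(2*π), F (Complex.exp (θ * Complex.I))) = 0 := by
    rcases mul_eq_zero.1 hC with h | h
    · exact absurd h Complex.I_ne_zero
    · exact h
  have hre := Complex.reCLM.intervalIntegral_comp_comm hint
  rw [hI] at hre
  simp only [Complex.reCLM_apply, map_zero] at hre
  have h2 : (∫ θ in (0:ℝ)..(2*π), Real.log (Complex.abs (1 - a * Complex.exp (θ * Complex.I))))
      = ∫ θ in (0:ℝ)..(2*π), (F (Complex.exp (θ * Complex.I))).re :=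
    intervalIntegral.integral_congr fun θ _ => by simp [hF, Complex.log_re, Complex.norm_eq_abs]
  rw [h2]
  exact hre

open Real MeasureTheory intervalIntegral

lemma absfact (y : ℂ) (hy : y ≠ 0) (θ : ℝ) :
    Complex.abs (y - Complex.exp (θ * Complex.I))
      = Complex.abs y * Complex.abs (1 - y⁻¹ * Complex.exp (θ * Complex.I)) := by
  rw [← map_mul]
  congr 1
  field_simp

lemma lemB (y : ℂ) (hy : 1 < Complex.abs y) :
    ∫ θ in (0:ℝ)..(2*π), Real.log (Complex.abs (y - Complex.exp (θ * Complex.I)))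
      = 2 * π * Real.log (Complex.abs y) := by
  have hy0 : y ≠ 0 := by
    intro h; rw [h] at hy; simp at hy; linarith
  have ha : Complex.abs y⁻¹ < 1 := by
    rw [map_inv₀]
    rw [inv_lt_one_iff₀]
    right; exact hy
  have habs : ∀ θ : ℝ, Complex.abs (1 - y⁻¹ * Complex.exp (θ * Complex.I)) ≠ 0 := by
    intro θ
    have h1 : Complex.abs (y⁻¹ * Complex.exp (θ * Complex.I)) < 1 := by
      rw [map_mul, Complex.abs_exp]
      simpa using ha
    intro h
    rw [Complex.abs.eq_zero, sub_eq_zero] at h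
    rw [← h] at h1
    simp at h1
  have heq : ∀ θ : ℝ, Real.log (Complex.abs (y - Complex.exp (θ * Complex.I)))
      = Real.log (Complex.abs y)
        + Real.log (Complex.abs (1 - y⁻¹ * Complex.exp (θ * Complex.I))) := by
    intro θ
    rw [absfact y hy0, Real.log_mul (by positivity) (habs θ)]
  rw [intervalIntegral.integral_congr (fun θ _ => heq θ)]
  have hint2 : IntervalIntegrable
      (fun θ : ℝ => Real.log (Complex.abs (1 - y⁻¹ * Complex.exp (θ * Complex.I))))
      MeasureTheory.volume 0 (2*π) := by
    exact ((Complex.continuous_abs.comp (contA y⁻¹)).log habs).intervalIntegrable _ _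
  rw [intervalIntegral.integral_add (intervalIntegrable_const) hint2, lemA y⁻¹ ha]
  simp [mul_comm]


lemma absexp (θ : ℝ) : Complex.abs (Complex.exp (θ * Complex.I)) = 1 := by
  rw [Complex.abs_exp]; simp

lemma monoabs (x e : ℂ) (hx : Complex.abs x = 1) (he : Complex.abs e = 1)
    {s t : ℝ} (h1 : 1 ≤ s) (hst : s ≤ t) :
    Complex.abs ((s:ℂ) * x - e) ≤ Complex.abs ((t:ℂ) * x - e) := by
  rw [Complex.abs_apply, Complex.abs_apply]
  apply Real.sqrt_le_sqrt
  rw [Complex.normSq_sub, Complex.normSq_sub]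
  have hnx : Complex.normSq x = 1 := by
    rw [← Complex.sq_abs, hx]; norm_num
  have hne : Complex.normSq e = 1 := by
    rw [← Complex.sq_abs, he]; norm_num
  have hmulre : ∀ u : ℝ, (((u:ℂ) * x) * (starRingEnd ℂ) e).re
      = u * ((x * (starRingEnd ℂ) e).re) := by
    intro u
    rw [mul_assoc, Complex.re_ofReal_mul]
  have hc : |(x * (starRingEnd ℂ) e).re| ≤ 1 := by
    refine le_trans (Complex.abs_re_le_abs _) ?_
    rw [map_mul, hx, Complex.abs_conj, he]; norm_num
  have hns : ∀ u : ℝ, Complex.normSq ((u:ℂ) * x) = u^2 := by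
    intro u
    rw [Complex.normSq_mul, hnx, Complex.normSq_ofReal]; ring
  rw [hns, hns, hmulre, hmulre, hne]
  have := abs_le.1 hc
  nlinarith [this.1, this.2]

lemma nullexp (x : ℂ) :
    MeasureTheory.volume {θ : ℝ | Complex.exp (θ * Complex.I) = x} = 0 := by
  set S := {θ : ℝ | Complex.exp (θ * Complex.I) = x} with hS
  rcases Set.eq_empty_or_nonempty S with h | ⟨θ₀, hθ₀⟩
  · rw [h]; simp
  · have hsub : S ⊆ Set.range (fun k : ℤ => θ₀ + k * (2 * π)) := by
      intro θ hθ
      have : Complex.exp (θ * Complex.I) = Complex.exp (θ₀ * Complex.I) := by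
        rw [hθ, hθ₀]
      rw [Complex.exp_eq_exp_iff_exists_int] at this
      obtain ⟨n, hn⟩ := this
      refine ⟨n, ?_⟩
      have h2 : (θ:ℂ) * Complex.I = ((θ₀ + n * (2 * π) : ℝ) : ℂ) * Complex.I := by
        push_cast
        rw [hn]; ring
      have h3 := mul_right_cancel₀ Complex.I_ne_zero h2
      exact (Complex.ofReal_inj.1 h3).symm ▸ rfl
    exact measure_mono_null hsub ((Set.countable_range _).measure_zero _)

lemma lemC (x : ℂ) (hx : Complex.abs x = 1) :
    ∫ θ in (0:ℝ)..(2*π), Real.log (Complex.abs (x - Complex.exp (θ * Complex.I))) = 0 := by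
  have pi_pos := Real.pi_pos
  set r : ℕ → ℝ := fun n => 1 + 1/(n+1) with hr
  have hr1 : ∀ n, 1 < r n := fun n => by
    have : (0:ℝ) < 1/(n+1) := by positivity
    simp only [hr]; linarith
  have hr2 : ∀ n, r n ≤ 2 := fun n => by
    have h0 : (0:ℝ) ≤ (n:ℝ) := Nat.cast_nonneg n
    have : 1/((n:ℝ)+1) ≤ 1 := by
      rw [div_le_one (by positivity)]; linarith
    simp only [hr]; linarith
  have hranti : ∀ {m n : ℕ}, m ≤ n → r n ≤ r m := by
    intro m n hmn
    simp only [hr]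
    have : 1/((n:ℝ)+1) ≤ 1/((m:ℝ)+1) := by
      apply one_div_le_one_div_of_le (by positivity)
      have : (m:ℝ) ≤ (n:ℝ) := Nat.cast_le.2 hmn
      linarith
    linarith
  have hrabs : ∀ n, Complex.abs ((r n : ℂ) * x) = r n := by
    intro n
    rw [map_mul, hx, mul_one, Complex.abs_ofReal, abs_of_pos (by linarith [hr1 n])]
  -- the functions
  set f : ℝ → ℝ := fun θ => Real.log (Complex.abs (x - Complex.exp (θ * Complex.I))) with hf
  set g : ℕ → ℝ → ℝ := fun n θ =>
    Real.log 3 - Real.log (Complex.abs ((r n : ℂ) * x - Complex.exp (θ * Complex.I))) with hg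
  set ginf : ℝ → ℝ := fun θ => Real.log 3 - f θ with hginf
  -- upper bounds on abs values
  have habs_le3 : ∀ n (θ : ℝ), Complex.abs ((r n : ℂ) * x - Complex.exp (θ * Complex.I)) ≤ 3 := by
    intro n (θ : ℝ)
    calc Complex.abs ((r n : ℂ) * x - Complex.exp (θ * Complex.I))
        ≤ Complex.abs ((r n : ℂ) * x) + Complex.abs (Complex.exp (θ * Complex.I)) := by
          simp only [← Complex.norm_eq_abs]; exact norm_sub_le _ _
      _ ≤ 3 := by rw [hrabs, absexp]; linarith [hr2 n]
  have habs_pos : ∀ n (θ : ℝ), 0 < Complex.abs ((r n : ℂ) * x - Complex.exp (θ * Complex.I)) := by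
    intro n θ
    have h1 : Complex.abs ((r n : ℂ) * x) - Complex.abs (Complex.exp (θ * Complex.I))
        ≤ Complex.abs ((r n : ℂ) * x - Complex.exp (θ * Complex.I)) := by
      simp only [← Complex.norm_eq_abs]
      exact norm_sub_norm_le _ _
    rw [hrabs, absexp] at h1
    linarith [hr1 n]
  -- log ≤ log 3 for values in [0,3]
  have hlog3 : ∀ u : ℝ, 0 ≤ u → u ≤ 3 → Real.log u ≤ Real.log 3 := by
    intro u h0 h3
    rcases eq_or_lt_of_le h0 with h | h
    · rw [← h, Real.log_zero]; positivity
    · exact Real.log_le_log h h3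
  have hg_nonneg : ∀ n θ, 0 ≤ g n θ := by
    intro n θ
    have := hlog3 _ (Complex.abs.nonneg _) (habs_le3 n θ)
    simp only [hg]; linarith
  have hginf_nonneg : ∀ θ, 0 ≤ ginf θ := by
    intro θ
    have h3 : Complex.abs (x - Complex.exp (θ * Complex.I)) ≤ 3 := by
      calc Complex.abs (x - Complex.exp (θ * Complex.I))
          ≤ Complex.abs x + Complex.abs (Complex.exp (θ * Complex.I)) := by
            simp only [← Complex.norm_eq_abs]; exact norm_sub_le _ _
        _ ≤ 3 := by rw [hx, absexp]; norm_num
    have := hlog3 _ (Complex.abs.nonneg _) h3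
    simp only [hginf, hf]; linarith
  -- monotonicity of g in n
  have hg_mono : ∀ θ, Monotone (fun n => g n θ) := by
    intro θ
    intro m n hmn
    simp only [hg]
    have := monoabs x (Complex.exp (θ * Complex.I)) hx (absexp θ)
      (le_of_lt (hr1 n)) (hranti hmn)
    have hlog := Real.log_le_log (habs_pos n θ) this
    linarith
  -- measure
  have h0le : (0:ℝ) ≤ 2*π := by positivity
  set μ := MeasureTheory.volume.restrict (Set.Ioc (0:ℝ) (2*π)) with hμ
  have hfn_cont : ∀ n, Continuous
      (fun θ : ℝ => Real.log (Complex.abs ((r n : ℂ) * x - Complex.exp (θ * Complex.I)))) := by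
    intro n
    apply Continuous.log
    · exact Complex.continuous_abs.comp (by fun_prop)
    · exact fun θ => (habs_pos n θ).ne'
  have hg_cont : ∀ n, Continuous (g n) := fun n => continuous_const.sub (hfn_cont n)
  have hf_meas : Measurable f := by
    apply Real.measurable_log.comp
    exact (Complex.continuous_abs.comp
      (show Continuous (fun θ : ℝ => x - Complex.exp (θ * Complex.I)) by fun_prop)).measurable
  have hginf_meas : Measurable ginf := measurable_const.sub hf_meas
  -- integral of g n over the interval
  have hfn_int : ∀ n, ∫ θ in (0:ℝ)..(2*π),
      Real.log (Complex.abs ((r n : ℂ) * x - Complex.exp (θ * Complex.I)))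
      = 2 * π * Real.log (r n) := by
    intro n
    have := lemB ((r n : ℂ) * x) (by rw [hrabs]; exact hr1 n)
    rwa [hrabs] at this
  have hgn_int : ∀ n, ∫ θ in (0:ℝ)..(2*π), g n θ
      = 2 * π * Real.log 3 - 2 * π * Real.log (r n) := by
    intro n
    simp only [hg]
    rw [intervalIntegral.integral_sub intervalIntegrable_const
      ((hfn_cont n).intervalIntegrable _ _), hfn_int n,
      intervalIntegral.integral_const]
    simp only [smul_eq_mul]
    ring
  have hgn_integrable : ∀ n, MeasureTheory.Integrable (g n) μ := by
    intro n
    rw [hμ]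
    exact (hg_cont n).integrableOn_Ioc
  have hlin : ∀ n, ∫⁻ θ, ENNReal.ofReal (g n θ) ∂μ
      = ENNReal.ofReal (2 * π * Real.log 3 - 2 * π * Real.log (r n)) := by
    intro n
    rw [← MeasureTheory.ofReal_integral_eq_lintegral_ofReal (hgn_integrable n)
      (MeasureTheory.ae_of_all _ (hg_nonneg n))]
    congr 1
    rw [hμ, ← intervalIntegral.integral_of_le h0le]
    exact hgn_int n
  -- limit of r
  have htr : Filter.Tendsto r Filter.atTop (nhds 1) := by
    have h2 : Filter.Tendsto (fun n : ℕ => 1 / ((n:ℝ) + 1)) Filter.atTop (nhds 0) :=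
      tendsto_one_div_add_atTop_nhds_zero_nat
    have := h2.const_add (1:ℝ)
    simpa [hr] using this
  -- pointwise sup identification off the null set
  have key : ∀ θ : ℝ, Complex.exp (θ * Complex.I) ≠ x →
      (⨆ n, ENNReal.ofReal (g n θ)) = ENNReal.ofReal (ginf θ) := by
    intro θ hθ
    have hane : Complex.abs (x - Complex.exp (θ * Complex.I)) ≠ 0 := by
      rw [Complex.abs.ne_zero_iff]
      exact sub_ne_zero.2 (Ne.symm hθ)
    have htc : Filter.Tendsto (fun n => ((r n : ℂ))) Filter.atTop (nhds 1) := by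
      have := (Complex.continuous_ofReal.tendsto 1).comp htr
      simpa [Function.comp_def] using this
    have ht2 : Filter.Tendsto (fun n => (r n : ℂ) * x - Complex.exp (θ * Complex.I))
        Filter.atTop (nhds (x - Complex.exp (θ * Complex.I))) := by
      have := (htc.mul_const x).sub_const (Complex.exp (θ * Complex.I))
      simpa using this
    have ht3 : Filter.Tendsto
        (fun n => Complex.abs ((r n : ℂ) * x - Complex.exp (θ * Complex.I)))
        Filter.atTop (nhds (Complex.abs (x - Complex.exp (θ * Complex.I)))) :=
      (Complex.continuous_abs.tendsto _).comp ht2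
    have ht4 : Filter.Tendsto
        (fun n => Real.log (Complex.abs ((r n : ℂ) * x - Complex.exp (θ * Complex.I))))
        Filter.atTop (nhds (f θ)) :=
      (Real.continuousAt_log hane).tendsto.comp ht3
    have ht5 : Filter.Tendsto (fun n => ENNReal.ofReal (g n θ)) Filter.atTop
        (nhds (ENNReal.ofReal (ginf θ))) := by
      apply (ENNReal.continuous_ofReal.tendsto _).comp
      exact (tendsto_const_nhds.sub ht4)
    exact iSup_eq_of_tendsto
      (fun m n hmn => ENNReal.ofReal_le_ofReal (hg_mono θ hmn)) ht5
  have hnull : μ {θ : ℝ | Complex.exp (θ * Complex.I) = x} = 0 :=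
    le_antisymm (le_trans (MeasureTheory.Measure.restrict_le_self _)
      (nullexp x).le) (by simp)
  have hae : ∀ᵐ θ ∂μ, (⨆ n, ENNReal.ofReal (g n θ)) = ENNReal.ofReal (ginf θ) := by
    rw [MeasureTheory.ae_iff]
    refine MeasureTheory.measure_mono_null ?_ hnull
    intro θ hθ
    by_contra h
    exact hθ (key θ h)
  -- supremum of the integral values
  have hsup : (⨆ n, ENNReal.ofReal (2 * π * Real.log 3 - 2 * π * Real.log (r n)))
      = ENNReal.ofReal (2 * π * Real.log 3) := by
    apply iSup_eq_of_tendsto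
    · intro m n hmn
      apply ENNReal.ofReal_le_ofReal
      have h1 : Real.log (r n) ≤ Real.log (r m) :=
        Real.log_le_log (by linarith [hr1 n]) (hranti hmn)
      nlinarith [pi_pos]
    · have h1 : Filter.Tendsto (fun n => Real.log (r n)) Filter.atTop (nhds 0) := by
        have := (Real.continuousAt_log one_ne_zero).tendsto.comp htr
        simpa [Function.comp_def] using this
      apply (ENNReal.continuous_ofReal.tendsto _).comp
      have := (h1.const_mul (2*π)).const_sub (2 * π * Real.log 3)
      simpa using this
  have hls : ∫⁻ θ, ENNReal.ofReal (ginf θ) ∂μ = ENNReal.ofReal (2 * π * Real.log 3) := by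
    rw [← MeasureTheory.lintegral_congr_ae hae,
      MeasureTheory.lintegral_iSup
        (fun n => (hg_cont n).measurable.ennreal_ofReal)
        (fun m n hmn θ => ENNReal.ofReal_le_ofReal (hg_mono θ hmn))]
    simp_rw [hlin]
    exact hsup
  -- conclude integrability and value
  have hginf_int : MeasureTheory.Integrable ginf μ := by
    constructor
    · exact hginf_meas.aestronglyMeasurable
    · rw [MeasureTheory.hasFiniteIntegral_iff_ofReal (MeasureTheory.ae_of_all _ hginf_nonneg)]
      rw [hls]
      exact ENNReal.ofReal_lt_top
  have hginf_val : ∫ θ, ginf θ ∂μ = 2 * π * Real.log 3 := by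
    rw [MeasureTheory.integral_eq_lintegral_of_nonneg_ae
      (MeasureTheory.ae_of_all _ hginf_nonneg) hginf_meas.aestronglyMeasurable, hls,
      ENNReal.toReal_ofReal]
    have : (0:ℝ) ≤ Real.log 3 := Real.log_nonneg (by norm_num)
    positivity
  have hii : IntervalIntegrable ginf MeasureTheory.volume 0 (2*π) := by
    rw [intervalIntegrable_iff_integrableOn_Ioc_of_le h0le]
    exact hginf_int
  have hfeq : ∫ θ in (0:ℝ)..(2*π), f θ = ∫ θ in (0:ℝ)..(2*π), (Real.log 3 - ginf θ) :=
    intervalIntegral.integral_congr (fun θ _ => by simp [hginf])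
  have : ∫ θ in (0:ℝ)..(2*π), f θ = 0 := by
    rw [hfeq, intervalIntegral.integral_sub intervalIntegrable_const hii,
      intervalIntegral.integral_const,
      show (∫ θ in (0:ℝ)..(2*π), ginf θ) = ∫ θ, ginf θ ∂μ from
        intervalIntegral.integral_of_le h0le, hginf_val]
    simp only [smul_eq_mul]
    ring
  exact this

lemma abs_eq_conj (x : ℂ) (θ : ℝ) :
    Complex.abs (x - Complex.exp (θ * Complex.I))
      = Complex.abs (1 - (starRingEnd ℂ) x * Complex.exp (θ * Complex.I)) := by
  have he : Complex.exp ((θ:ℂ) * Complex.I) ≠ 0 := Complex.exp_ne_zero _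
  have hconj : (starRingEnd ℂ) (1 - (starRingEnd ℂ) x * Complex.exp (θ * Complex.I))
      = 1 - x * (Complex.exp ((θ:ℂ) * Complex.I))⁻¹ := by
    rw [map_sub, map_one, map_mul, Complex.conj_conj]
    congr 1
    rw [← Complex.exp_conj, ← Complex.exp_neg]
    congr 1
    simp [Complex.conj_I]
  have h2 : x - Complex.exp ((θ:ℂ) * Complex.I)
      = -(Complex.exp ((θ:ℂ) * Complex.I)) * (1 - x * (Complex.exp ((θ:ℂ) * Complex.I))⁻¹) := by
    field_simp
    ring
  rw [h2, map_mul, Complex.abs.map_neg, absexp θ, one_mul, ← hconj, Complex.abs_conj]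

/-- `log max(|x|,1)` equals the average of `log|x - e^{iθ}|` over the unit circle. -/
theorem log_max_abs_one_eq_circle_average (x : ℂ) :
    Real.log (max ‖x‖ 1) =
      (1 / (2 * π)) * ∫ θ in (0:ℝ)..(2 * π),
        Real.log ‖x - Complex.exp (θ * Complex.I)‖ := by
  show Real.log (max (Complex.abs x) 1) =
      (1 / (2 * π)) * ∫ θ in (0:ℝ)..(2 * π),
        Real.log (Complex.abs (x - Complex.exp (θ * Complex.I)))
  rcases lt_trichotomy (Complex.abs x) 1 with h | h | h
  · have hcongr : (∫ θ in (0:ℝ)..(2*π),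
        Real.log (Complex.abs (x - Complex.exp (θ * Complex.I))))
        = ∫ θ in (0:ℝ)..(2*π),
          Real.log (Complex.abs (1 - (starRingEnd ℂ) x * Complex.exp (θ * Complex.I))) :=
      intervalIntegral.integral_congr fun θ _ => by rw [abs_eq_conj]
    rw [max_eq_right h.le, Real.log_one, hcongr, lemA _ (by rwa [Complex.abs_conj]), mul_zero]
  · rw [max_eq_right h.le, Real.log_one, lemC x h, mul_zero]
  · rw [max_eq_left h.le, lemB x h]
    have : π ≠ 0 := Real.pi_ne_zero
    field_simp
end

section
/- Let μ be a finite positive Borel measure on ℂ, let C > 0, and suppose μ(D(z,r)) ≤ C·r for every z ∈ ℂ and every r > 0. Then there is a constant C' (depending only on C and the total mass of μ) such that for every z with |z| ≤ 1, |∫ log|z − ζ| dμ(ζ)| ≤ C', where the integral is over the closed unit disk and μ is supported in the closed unit disk. -/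
open Metric MeasureTheory

/-- A finite measure on the closed unit disk whose mass on disks grows at most linearly in the
radius has uniformly bounded logarithmic potential on the unit disk. -/
theorem bounded_log_potential_of_linear_disk_mass
    (μ : Measure ℂ) [IsFiniteMeasure μ] (hsupp : μ (closedBall (0 : ℂ) 1)ᶜ = 0)
    (C : ℝ) (hC : 0 < C)
    (hμ : ∀ (z : ℂ) (r : ℝ), 0 < r → μ (ball z r) ≤ ENNReal.ofReal (C * r)) :
    ∃ C' : ℝ, ∀ z : ℂ, ‖z‖ ≤ 1 →
      |∫ ζ, Real.log ‖z - ζ‖ ∂μ| ≤ C' := by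
  refine ⟨(ENNReal.ofReal (Real.log 2) * μ Set.univ + ENNReal.ofReal C).toReal, ?_⟩
  intro z hz
  set f : ℂ → ℝ := fun ζ => Real.log ‖z - ζ‖ with hf
  have hmeas : Measurable f :=
    Real.measurable_log.comp (continuous_norm.measurable.comp
      (measurable_const.sub measurable_id))
  set g : ℂ → ℝ := fun ζ => max (-(f ζ)) 0 with hg
  have hgmeas : Measurable g := (hmeas.neg).max measurable_const
  have hgnn : ∀ ζ, 0 ≤ g ζ := fun ζ => le_max_right _ _
  -- layer cake bound for g
  have hgbound : ∫⁻ ζ, ENNReal.ofReal (g ζ) ∂μ ≤ ENNReal.ofReal C := by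
    rw [lintegral_eq_lintegral_meas_lt μ (Filter.Eventually.of_forall hgnn)
      hgmeas.aemeasurable]
    have hstep : ∀ t ∈ Set.Ioi (0 : ℝ),
        μ {a : ℂ | t < g a} ≤ ENNReal.ofReal (C * Real.exp (-t)) := by
      intro t ht
      have hsub : {a : ℂ | t < g a} ⊆ ball z (Real.exp (-t)) := by
        intro a ha
        simp only [Set.mem_setOf_eq] at ha
        have ht0 : (0 : ℝ) < t := ht
        have hfa : t < -(f a) := by
          rcases max_cases (-(f a)) (0 : ℝ) with ⟨h1, _⟩ | ⟨h1, _⟩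
          · rw [hg] at ha; simp only [h1] at ha; exact ha
          · rw [hg] at ha; simp only [h1] at ha; exact absurd ha (not_lt.2 ht0.le)
        have hlt : f a < -t := by linarith
        have key2 : ‖z - a‖ < Real.exp (-t) := by
          rcases eq_or_lt_of_le (norm_nonneg (z - a)) with h0 | h0
          · rw [← h0]; exact Real.exp_pos _
          · calc ‖z - a‖ = Real.exp (Real.log ‖z - a‖) :=
                (Real.exp_log h0).symm
              _ < Real.exp (-t) := Real.exp_lt_exp.mpr hlt
        rw [mem_ball, Complex.dist_eq, norm_sub_rev]
        exact key2
      exact le_trans (measure_mono hsub) (hμ z _ (Real.exp_pos _))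
    calc ∫⁻ t in Set.Ioi (0:ℝ), μ {a : ℂ | t < g a}
        ≤ ∫⁻ t in Set.Ioi (0:ℝ), ENNReal.ofReal (C * Real.exp (-t)) := by
          refine setLIntegral_mono_ae ?_ ?_
          · fun_prop
          · exact Filter.Eventually.of_forall hstep
      _ = ENNReal.ofReal (∫ t in Set.Ioi (0:ℝ), C * Real.exp (-t)) := by
          rw [← ofReal_integral_eq_lintegral_ofReal]
          · have : IntegrableOn (fun x : ℝ => Real.exp (-1 * x)) (Set.Ioi (0:ℝ)) :=
              exp_neg_integrableOn_Ioi 0 one_pos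
            simp only [neg_one_mul] at this
            exact this.const_mul C
          · exact Filter.Eventually.of_forall fun t =>
              mul_nonneg hC.le (Real.exp_pos _).le
      _ = ENNReal.ofReal C := by
          rw [MeasureTheory.integral_const_mul, integral_exp_neg_Ioi_zero, mul_one]
  -- pointwise bound a.e.
  have hae : ∀ᵐ ζ ∂μ, ENNReal.ofReal ‖f ζ‖ ≤
      ENNReal.ofReal (Real.log 2) + ENNReal.ofReal (g ζ) := by
    have hmem : ∀ᵐ ζ ∂μ, ζ ∈ closedBall (0 : ℂ) 1 := by
      rw [MeasureTheory.ae_iff]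
      exact hsupp
    filter_upwards [hmem] with ζ hζ
    have habs : ‖z - ζ‖ ≤ 2 := by
      calc ‖z - ζ‖ ≤ ‖z‖ + ‖ζ‖ := by
            simpa [sub_eq_add_neg] using norm_add_le z (-ζ)
        _ ≤ 1 + 1 := by
            refine add_le_add hz ?_
            simpa [Complex.dist_eq] using mem_closedBall.mp hζ
        _ = 2 := by norm_num
    have hlog2 : (0:ℝ) ≤ Real.log 2 := Real.log_nonneg one_le_two
    have hfle : f ζ ≤ Real.log 2 := by
      rcases eq_or_lt_of_le (norm_nonneg (z - ζ)) with h0 | h0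
      · rw [hf]; simp only [← h0, Real.log_zero]; exact hlog2
      · exact Real.log_le_log h0 habs
    rw [← ENNReal.ofReal_add hlog2 (hgnn ζ)]
    refine ENNReal.ofReal_le_ofReal ?_
    rw [Real.norm_eq_abs, abs_le]
    constructor
    · have : -(f ζ) ≤ g ζ := le_max_left _ _
      linarith
    · linarith [hgnn ζ]
  -- combine
  have key : ∫⁻ ζ, ENNReal.ofReal ‖f ζ‖ ∂μ ≤
      ENNReal.ofReal (Real.log 2) * μ Set.univ + ENNReal.ofReal C := by
    calc ∫⁻ ζ, ENNReal.ofReal ‖f ζ‖ ∂μ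
        ≤ ∫⁻ ζ, (ENNReal.ofReal (Real.log 2) + ENNReal.ofReal (g ζ)) ∂μ :=
          lintegral_mono_ae hae
      _ = ENNReal.ofReal (Real.log 2) * μ Set.univ + ∫⁻ ζ, ENNReal.ofReal (g ζ) ∂μ := by
          rw [lintegral_add_left measurable_const, lintegral_const]
      _ ≤ ENNReal.ofReal (Real.log 2) * μ Set.univ + ENNReal.ofReal C :=
          add_le_add le_rfl hgbound
  have hfin : ENNReal.ofReal (Real.log 2) * μ Set.univ + ENNReal.ofReal C ≠ ⊤ :=
    ENNReal.add_ne_top.mpr ⟨ENNReal.mul_ne_top ENNReal.ofReal_ne_top (measure_ne_top μ _),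
      ENNReal.ofReal_ne_top⟩
  calc |∫ ζ, f ζ ∂μ| = ‖∫ ζ, f ζ ∂μ‖ := (Real.norm_eq_abs _).symm
    _ ≤ (∫⁻ ζ, ENNReal.ofReal ‖f ζ‖ ∂μ).toReal := norm_integral_le_lintegral_norm f
    _ ≤ _ := ENNReal.toReal_mono hfin key
end

section
/- Let θ : (0, r₀) → (0, ∞) be C¹, decreasing, with θ(r) → +∞ as r → 0⁺, and suppose θ'(r)/θ(r) = o(1/(r·log r)) as r → 0⁺. Set h(r) = r²·θ(r). Then as r → 0⁺: (a) ∫₀^{2r} h(s)/s² ds ∼ 2r·θ(2r), and (b) ∫_r^{r₀} h(s)/s³ ds ∼ |log r|·θ(r). Consequently ψ(r) := ∫₀^{2r} h(s)/s² ds + r ∫_r^{r₀} h(s)/s³ ds satisfies ψ(r) = O(r·|log r|·θ(r)). -/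
open Filter MeasureTheory Set intervalIntegral

lemma aux_delta (ε : ℝ → ℝ) (h : Tendsto ε (nhdsWithin 0 (Set.Ioi 0)) (nhds 0)) {η : ℝ} (hη : 0 < η) :
    ∃ δ > 0, ∀ s, 0 < s → s < δ → |ε s| < η := by
  rw [Metric.tendsto_nhdsWithin_nhds] at h
  obtain ⟨δ, hδ, H⟩ := h η hη
  refine ⟨δ, hδ, fun s hs1 hs2 => ?_⟩
  simpa [Real.dist_eq, abs_of_pos hs1] using H (Set.mem_Ioi.mpr hs1) (by simpa [Real.dist_eq, abs_of_pos hs1])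

lemma log_bound {r₀ : ℝ} (hr₀ : 0 < r₀) {θ : ℝ → ℝ}
    (hθdiff : ∀ x ∈ Set.Ioo (0:ℝ) r₀, HasDerivAt θ (deriv θ x) x)
    (hθpos : ∀ r ∈ Set.Ioo (0:ℝ) r₀, 0 < θ r)
    (hlittleo : Tendsto (fun r => deriv θ r / θ r * (r * Real.log r))
      (nhdsWithin 0 (Set.Ioi 0)) (nhds 0)) :
    ∃ r₂ C : ℝ, 0 < r₂ ∧ r₂ < r₀ ∧ r₂ < 1 ∧ 0 < C ∧
      ∀ s, 0 < s → s ≤ r₂ → θ s ≤ C * (-Real.log s) := by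
  obtain ⟨δ, hδ, Hδ⟩ := aux_delta _ hlittleo (η := 1/2) (by norm_num)
  set R : ℝ := min δ (min r₀ 1) with hR
  have hRpos : 0 < R := lt_min hδ (lt_min hr₀ one_pos)
  have hRr₀ : R ≤ r₀ := (min_le_right _ _).trans (min_le_left _ _)
  have hR1 : R ≤ 1 := (min_le_right _ _).trans (min_le_right _ _)
  have hRδ : R ≤ δ := min_le_left _ _
  -- m = log θ - log (-log) is monotone on Ioo 0 R
  set m : ℝ → ℝ := fun x => Real.log (θ x) - Real.log (-Real.log x) with hm
  have hmono : MonotoneOn m (Set.Ioo 0 R) := by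
    have hconv : Convex ℝ (Set.Ioo (0:ℝ) R) := convex_Ioo _ _
    have hderiv : ∀ x ∈ Set.Ioo (0:ℝ) R, HasDerivAt m
        (deriv θ x / θ x - 1 / (x * Real.log x)) x := by
      intro x hx
      have hx0 : 0 < x := hx.1
      have hx1 : x < 1 := lt_of_lt_of_le hx.2 hR1
      have hxr₀ : x ∈ Set.Ioo (0:ℝ) r₀ := ⟨hx0, lt_of_lt_of_le hx.2 hRr₀⟩
      have hθx : θ x ≠ 0 := (hθpos x hxr₀).ne'
      have hlogx : Real.log x < 0 := Real.log_neg hx0 hx1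
      have h1 : HasDerivAt (fun y => Real.log (θ y)) (deriv θ x / θ x) x :=
        (hθdiff x hxr₀).log hθx
      have h2 : HasDerivAt (fun y => Real.log (-Real.log y)) ((-x⁻¹) / (-Real.log x)) x := by
        have : HasDerivAt (fun y => -Real.log y) (-x⁻¹) x := (Real.hasDerivAt_log hx0.ne').neg
        exact this.log (ne_of_gt (by linarith))
      have : (-x⁻¹) / (-Real.log x) = 1 / (x * Real.log x) := by
        field_simp
      rw [this] at h2
      exact h1.sub h2
    have hpos : ∀ x ∈ interior (Set.Ioo (0:ℝ) R), 0 ≤ deriv θ x / θ x - 1 / (x * Real.log x) := by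
      rw [interior_Ioo]
      intro x hx
      have hx0 : 0 < x := hx.1
      have hx1 : x < 1 := lt_of_lt_of_le hx.2 hR1
      have hxr₀ : x ∈ Set.Ioo (0:ℝ) r₀ := ⟨hx0, lt_of_lt_of_le hx.2 hRr₀⟩
      have hθx : θ x ≠ 0 := (hθpos x hxr₀).ne'
      have hlogx : Real.log x < 0 := Real.log_neg hx0 hx1
      have hxl : x * Real.log x < 0 := mul_neg_of_pos_of_neg hx0 hlogx
      have hε := (Hδ x hx0 (lt_of_lt_of_le hx.2 hRδ))
      have key : deriv θ x / θ x - 1 / (x * Real.log x)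
          = (1 - deriv θ x / θ x * (x * Real.log x)) / (-(x * Real.log x)) := by
        have hxlne : x * Real.log x ≠ 0 := hxl.ne
        have h1 : deriv θ x / θ x * (x * Real.log x) / (x * Real.log x) = deriv θ x / θ x :=
          mul_div_cancel_right₀ _ hxlne
        rw [eq_comm, div_neg, sub_div, h1]
        ring
      rw [key]
      apply div_nonneg _ (by linarith)
      have : deriv θ x / θ x * (x * Real.log x) ≤ 1/2 := (abs_le.mp hε.le).2
      linarith
    exact monotoneOn_of_hasDerivWithinAt_nonneg hconv
      (fun x hx => (hderiv x hx).continuousAt.continuousWithinAt)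
      (fun x hx => by rw [interior_Ioo] at hx; exact (hderiv x hx).hasDerivWithinAt)
      (by simpa using hpos)
  refine ⟨R/2, Real.exp (m (R/2)), by positivity, by linarith [hRr₀, hRpos], by linarith [hR1, hRpos],
    Real.exp_pos _, ?_⟩
  intro s hs0 hs2
  have hsR : s ∈ Set.Ioo (0:ℝ) R := ⟨hs0, by linarith⟩
  have hRR : R/2 ∈ Set.Ioo (0:ℝ) R := ⟨by positivity, by linarith⟩
  have hms : m s ≤ m (R/2) := hmono hsR hRR hs2
  have hs1 : s < 1 := lt_of_lt_of_le (by linarith [hsR.2]) hR1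
  have hlogs : 0 < -Real.log s := by
    have := Real.log_neg hs0 hs1; linarith
  have hθs : 0 < θ s := hθpos s ⟨hs0, hsR.2.trans_le hRr₀⟩
  have : Real.log (θ s) ≤ m (R/2) + Real.log (-Real.log s) := by
    have h' : Real.log (θ s) - Real.log (-Real.log s) ≤ m (R/2) := hms
    linarith
  calc θ s = Real.exp (Real.log (θ s)) := (Real.exp_log hθs).symm
    _ ≤ Real.exp (m (R/2) + Real.log (-Real.log s)) := Real.exp_le_exp.mpr this
    _ = Real.exp (m (R/2)) * (-Real.log s) := by
        rw [Real.exp_add, Real.exp_log hlogs]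


lemma rpow_bound {C r₂ : ℝ} (hC : 0 < C) (hr₂1 : r₂ < 1) {θ : ℝ → ℝ}
    (hθpos' : ∀ s, 0 < s → s ≤ r₂ → 0 < θ s)
    (hbd : ∀ s, 0 < s → s ≤ r₂ → θ s ≤ C * (-Real.log s)) :
    ∀ s, 0 < s → s ≤ r₂ → θ s ≤ 2 * C * s ^ (-(1/2) : ℝ) := by
  intro s hs0 hs2
  have h1 : -Real.log s = 2 * Real.log (s ^ (-(1/2) : ℝ)) := by
    rw [Real.log_rpow hs0]; ring
  have h2 : Real.log (s ^ (-(1/2) : ℝ)) ≤ s ^ (-(1/2) : ℝ) := by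
    have hp : 0 < s ^ (-(1/2) : ℝ) := Real.rpow_pos_of_pos hs0 _
    linarith [Real.log_le_sub_one_of_pos hp]
  calc θ s ≤ C * (-Real.log s) := hbd s hs0 hs2
    _ = 2 * C * Real.log (s ^ (-(1/2) : ℝ)) := by rw [h1]; ring
    _ ≤ 2 * C * s ^ (-(1/2) : ℝ) := by nlinarith

lemma theta_int {r₀ r₂ C : ℝ} (hr₂0 : 0 < r₂) (hr₂r₀ : r₂ < r₀) (hr₂1 : r₂ < 1) (hC : 0 < C)
    {θ : ℝ → ℝ} (hθcont : ContinuousOn θ (Set.Ioo 0 r₀))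
    (hθpos : ∀ r ∈ Set.Ioo (0:ℝ) r₀, 0 < θ r)
    (hbd : ∀ s, 0 < s → s ≤ r₂ → θ s ≤ C * (-Real.log s)) :
    (∀ a, 0 < a → a ≤ r₂ → IntegrableOn θ (Set.Ioc 0 a)) ∧
      Tendsto (fun x => ∫ s in (0:ℝ)..x, θ s) (nhdsWithin 0 (Set.Ioi 0)) (nhds 0) := by
  have hbd2 := rpow_bound hC hr₂1
    (fun s hs0 hs2 => hθpos s ⟨hs0, lt_of_le_of_lt hs2 hr₂r₀⟩) hbd
  have hgint : ∀ a : ℝ, IntegrableOn (fun s => 2 * C * s ^ (-(1/2) : ℝ)) (Set.Ioc 0 a) := by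
    intro a
    rcases le_or_gt a 0 with ha | ha
    · rw [Set.Ioc_eq_empty (by intro hc; exact absurd (lt_of_lt_of_le hc ha) (lt_irrefl 0))]
      exact integrableOn_empty
    · have := (intervalIntegrable_rpow' (a := 0) (b := a) (r := (-(1/2):ℝ)) (by norm_num))
      rw [intervalIntegrable_iff_integrableOn_Ioc_of_le ha.le] at this
      exact this.const_mul _
  have hint : ∀ a, 0 < a → a ≤ r₂ → IntegrableOn θ (Set.Ioc 0 a) := by
    intro a ha0 ha2
    have hsub : Set.Ioc (0:ℝ) a ⊆ Set.Ioo 0 r₀ :=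
      fun s hs => ⟨hs.1, lt_of_le_of_lt (hs.2.trans ha2) hr₂r₀⟩
    refine Integrable.mono' (hgint a)
      ((hθcont.mono hsub).aestronglyMeasurable measurableSet_Ioc) ?_
    rw [ae_restrict_iff' measurableSet_Ioc]
    filter_upwards with s hs
    rw [Real.norm_eq_abs, abs_of_pos (hθpos s (hsub hs))]
    exact hbd2 s hs.1 (hs.2.trans ha2)
  refine ⟨hint, ?_⟩
  have hub : ∀ x, 0 < x → x ≤ r₂ → (∫ s in (0:ℝ)..x, θ s) ≤ 4 * C * x ^ ((1/2) : ℝ) := by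
    intro x hx0 hx2
    have h1 : (∫ s in (0:ℝ)..x, θ s) ≤ ∫ s in (0:ℝ)..x, 2 * C * s ^ (-(1/2) : ℝ) := by
      rw [integral_of_le hx0.le, integral_of_le hx0.le]
      refine setIntegral_mono_on (hint x hx0 hx2) (hgint x) measurableSet_Ioc ?_
      exact fun s hs => hbd2 s hs.1 (hs.2.trans hx2)
    have h2 : (∫ s in (0:ℝ)..x, 2 * C * s ^ (-(1/2) : ℝ)) = 4 * C * x ^ ((1/2) : ℝ) := by
      rw [intervalIntegral.integral_const_mul, integral_rpow (Or.inl (by norm_num))]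
      rw [Real.zero_rpow (by norm_num)]
      norm_num
      ring
    linarith
  have hlb : ∀ x, 0 < x → x < r₀ → 0 ≤ ∫ s in (0:ℝ)..x, θ s := by
    intro x hx0 hxr
    rw [integral_of_le hx0.le]
    refine setIntegral_nonneg measurableSet_Ioc fun s hs => ?_
    exact (hθpos s ⟨hs.1, lt_of_le_of_lt hs.2 hxr⟩).le
  have htop : Tendsto (fun x : ℝ => 4 * C * x ^ ((1/2) : ℝ)) (nhdsWithin 0 (Set.Ioi 0)) (nhds 0) := by
    have h1 : Tendsto (fun x : ℝ => x ^ ((1/2) : ℝ)) (nhds 0) (nhds 0) := by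
      have := (Real.continuousAt_rpow_const 0 ((1/2) : ℝ) (Or.inr (by norm_num)))
      simpa [Real.zero_rpow, (by norm_num : ((1:ℝ)/2) ≠ 0)] using this.tendsto
    have h2 := (h1.const_mul (4 * C)).mono_left (nhdsWithin_le_nhds (s := Set.Ioi 0))
    simpa using h2
  refine tendsto_of_tendsto_of_tendsto_of_le_of_le' tendsto_const_nhds htop ?_ ?_
  · filter_upwards [Ioo_mem_nhdsGT_of_mem (Set.mem_Ico.mpr ⟨le_refl 0, hr₂0⟩)] with x hx
    exact hlb x hx.1 (hx.2.trans hr₂r₀)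
  · filter_upwards [Ioo_mem_nhdsGT_of_mem (Set.mem_Ico.mpr ⟨le_refl 0, hr₂0⟩)] with x hx
    exact hub x hx.1 hx.2.le


lemma tendsto_two : Tendsto (fun r : ℝ => 2 * r) (nhdsWithin 0 (Set.Ioi 0)) (nhdsWithin 0 (Set.Ioi 0)) := by
  rw [tendsto_nhdsWithin_iff]
  constructor
  · have : Tendsto (fun r : ℝ => 2 * r) (nhds 0) (nhds (2 * 0)) :=
      (continuous_const.mul continuous_id).tendsto 0
    simpa using this.mono_left nhdsWithin_le_nhds
  · filter_upwards [self_mem_nhdsWithin] with r hr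
    have hr' : 0 < r := Set.mem_Ioi.mp hr
    exact Set.mem_Ioi.mpr (by positivity)

lemma tendsto_e {θ : ℝ → ℝ}
    (hlittleo : Tendsto (fun r => deriv θ r / θ r * (r * Real.log r))
      (nhdsWithin 0 (Set.Ioi 0)) (nhds 0)) :
    Tendsto (fun s => deriv θ s / θ s * s) (nhdsWithin 0 (Set.Ioi 0)) (nhds 0) := by
  have hlog : Tendsto (fun s : ℝ => (Real.log s)⁻¹) (nhdsWithin 0 (Set.Ioi 0)) (nhds 0) := by
    have h1 : Tendsto (fun s : ℝ => -Real.log s) (nhdsWithin 0 (Set.Ioi 0)) atTop :=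
      tendsto_neg_atBot_atTop.comp Real.tendsto_log_nhdsGT_zero
    have h2 := h1.inv_tendsto_atTop
    have h3 := h2.neg
    simp only [Pi.inv_apply, inv_neg, neg_neg, neg_zero] at h3
    exact h3
  have := hlittleo.mul hlog
  rw [mul_zero] at this
  refine this.congr' ?_
  filter_upwards [Ioo_mem_nhdsGT_of_mem (Set.mem_Ico.mpr ⟨le_refl (0:ℝ), one_pos⟩)] with s hs
  have hlogs : Real.log s ≠ 0 := (Real.log_neg hs.1 hs.2).ne
  rw [show deriv θ s / θ s * (s * Real.log s) * (Real.log s)⁻¹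
      = deriv θ s / θ s * s * (Real.log s * (Real.log s)⁻¹) by ring,
    mul_inv_cancel₀ hlogs, mul_one]

lemma part_a {r₀ r₂ C : ℝ} (hr₀ : 0 < r₀) (hr₂0 : 0 < r₂) (hr₂r₀ : r₂ < r₀) (hr₂1 : r₂ < 1)
    (hC : 0 < C) {θ : ℝ → ℝ}
    (hθdiff : ∀ x ∈ Set.Ioo (0:ℝ) r₀, HasDerivAt θ (deriv θ x) x)
    (hθcont : ContinuousOn θ (Set.Ioo 0 r₀))
    (hθpos : ∀ r ∈ Set.Ioo (0:ℝ) r₀, 0 < θ r)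
    (hlittleo : Tendsto (fun r => deriv θ r / θ r * (r * Real.log r))
      (nhdsWithin 0 (Set.Ioi 0)) (nhds 0))
    (hint : ∀ a, 0 < a → a ≤ r₂ → IntegrableOn θ (Set.Ioc 0 a))
    (hF0 : Tendsto (fun x => ∫ s in (0:ℝ)..x, θ s) (nhdsWithin 0 (Set.Ioi 0)) (nhds 0))
    (hbd : ∀ s, 0 < s → s ≤ r₂ → θ s ≤ C * (-Real.log s)) :
    Tendsto (fun r => (∫ s in (0:ℝ)..(2*r), θ s) / (2 * r * θ (2*r)))
      (nhdsWithin 0 (Set.Ioi 0)) (nhds 1) := by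
  obtain ⟨δ₁, hδ₁, Hδ₁⟩ := aux_delta _ (tendsto_e hlittleo) (η := 1/2) (by norm_num)
  set b : ℝ := min (r₂/2) (δ₁/2) with hb
  have hb0 : 0 < b := lt_min (by linarith) (by linarith)
  have hmem : ∀ r ∈ Set.Ioo (0:ℝ) b, (0 < 2*r ∧ 2*r ≤ r₂ ∧ 2*r < δ₁ ∧ 2*r ∈ Set.Ioo (0:ℝ) r₀) := by
    intro r hr
    have h1 : r < r₂/2 := lt_of_lt_of_le hr.2 (min_le_left _ _)
    have h2 : r < δ₁/2 := lt_of_lt_of_le hr.2 (min_le_right _ _)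
    exact ⟨by linarith [hr.1], by linarith, by linarith,
      ⟨by linarith [hr.1], by linarith⟩⟩
  -- derivative of f
  have hff' : ∀ r ∈ Set.Ioo (0:ℝ) b,
      HasDerivAt (fun r => ∫ s in (0:ℝ)..(2*r), θ s) (2 * θ (2*r)) r := by
    intro r hr
    obtain ⟨h1, h2, h3, h4⟩ := hmem r hr
    have hII : IntervalIntegrable θ volume 0 (2*r) := by
      rw [intervalIntegrable_iff_integrableOn_Ioc_of_le h1.le]
      exact hint (2*r) h1 h2
    have hmeas := ContinuousOn.stronglyMeasurableAtFilter (μ := volume) isOpen_Ioo hθcont (2*r) h4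
    have hca : ContinuousAt θ (2*r) := hθcont.continuousAt (isOpen_Ioo.mem_nhds h4)
    have hF : HasDerivAt (fun u => ∫ s in (0:ℝ)..u, θ s) (θ (2*r)) (2*r) :=
      intervalIntegral.integral_hasDerivAt_right hII hmeas hca
    have h2r : HasDerivAt (fun r : ℝ => 2*r) 2 r := by
      simpa using (hasDerivAt_id r).const_mul (2:ℝ)
    have h5 := hF.comp r h2r
    have heq : θ (2*r) * 2 = 2 * θ (2*r) := mul_comm _ _
    rw [heq] at h5
    exact h5
  -- derivative of g
  have hgg' : ∀ r ∈ Set.Ioo (0:ℝ) b,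
      HasDerivAt (fun r => 2 * r * θ (2*r)) (2 * θ (2*r) + 4 * r * deriv θ (2*r)) r := by
    intro r hr
    obtain ⟨h1, h2, h3, h4⟩ := hmem r hr
    have h2r : HasDerivAt (fun r : ℝ => 2*r) 2 r := by
      simpa using (hasDerivAt_id r).const_mul (2:ℝ)
    have hθ2 : HasDerivAt (fun r : ℝ => θ (2*r)) (deriv θ (2*r) * 2) r :=
      (hθdiff (2*r) h4).comp r h2r
    have := h2r.mul hθ2
    rw [show (2:ℝ) * θ (2*r) + 4 * r * deriv θ (2*r) = 2 * θ (2*r) + 2*r*(deriv θ (2*r) * 2) by ring]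
    exact this
  -- g' nonzero
  have he : ∀ r ∈ Set.Ioo (0:ℝ) b, 2 * θ (2*r) + 4 * r * deriv θ (2*r)
      = 2 * θ (2*r) * (1 + deriv θ (2*r) / θ (2*r) * (2*r)) := by
    intro r hr
    obtain ⟨h1, h2, h3, h4⟩ := hmem r hr
    have hθne : θ (2*r) ≠ 0 := (hθpos _ h4).ne'
    field_simp
    ring
  have hg' : ∀ r ∈ Set.Ioo (0:ℝ) b, 2 * θ (2*r) + 4 * r * deriv θ (2*r) ≠ 0 := by
    intro r hr
    obtain ⟨h1, h2, h3, h4⟩ := hmem r hr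
    rw [he r hr]
    have hεb := Hδ₁ (2*r) h1 h3
    have h5 : (0:ℝ) < 1 + deriv θ (2*r) / θ (2*r) * (2*r) := by
      have := abs_lt.mp hεb
      linarith [this.1]
    exact (mul_pos (by linarith [hθpos _ h4]) h5).ne'
  -- f tends to 0
  have hfa : Tendsto (fun r => ∫ s in (0:ℝ)..(2*r), θ s) (nhdsWithin 0 (Set.Ioi 0)) (nhds 0) :=
    hF0.comp tendsto_two
  -- g tends to 0
  have hga : Tendsto (fun r => 2 * r * θ (2*r)) (nhdsWithin 0 (Set.Ioi 0)) (nhds 0) := by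
    have hup : Tendsto (fun r : ℝ => C * (-(2 * r * Real.log (2*r))))
        (nhdsWithin 0 (Set.Ioi 0)) (nhds 0) := by
      have h1 : Tendsto (fun u : ℝ => u * Real.log u) (nhds 0) (nhds 0) := by
        have := Real.continuous_mul_log.tendsto 0
        simpa using this
      have h2 : Tendsto (fun r : ℝ => 2 * r * Real.log (2*r)) (nhdsWithin 0 (Set.Ioi 0)) (nhds 0) := by
        have h3 : Tendsto (fun r : ℝ => 2 * r) (nhdsWithin 0 (Set.Ioi 0)) (nhds 0) :=
          tendsto_two.mono_right nhdsWithin_le_nhds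
        exact h1.comp h3
      have := (h2.neg).const_mul C
      simpa using this
    refine tendsto_of_tendsto_of_tendsto_of_le_of_le' tendsto_const_nhds hup ?_ ?_
    · filter_upwards [Ioo_mem_nhdsGT_of_mem (Set.mem_Ico.mpr ⟨le_refl (0:ℝ), hb0⟩)] with r hr
      obtain ⟨h1, h2, h3, h4⟩ := hmem r hr
      exact mul_nonneg h1.le (hθpos _ h4).le
    · filter_upwards [Ioo_mem_nhdsGT_of_mem (Set.mem_Ico.mpr ⟨le_refl (0:ℝ), hb0⟩)] with r hr
      obtain ⟨h1, h2, h3, h4⟩ := hmem r hr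
      have := hbd (2*r) h1 h2
      nlinarith [this, h1]
  -- f'/g' tends to 1
  have hdiv : Tendsto (fun r => 2 * θ (2*r) / (2 * θ (2*r) + 4 * r * deriv θ (2*r)))
      (nhdsWithin 0 (Set.Ioi 0)) (nhds 1) := by
    have te : Tendsto (fun r => deriv θ (2*r) / θ (2*r) * (2*r))
        (nhdsWithin 0 (Set.Ioi 0)) (nhds 0) := (tendsto_e hlittleo).comp tendsto_two
    have hlim : Tendsto (fun r => (1 + deriv θ (2*r) / θ (2*r) * (2*r))⁻¹)
        (nhdsWithin 0 (Set.Ioi 0)) (nhds 1) := by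
      have h6 := Filter.Tendsto.inv₀ (f := fun r => 1 + deriv θ (2*r) / θ (2*r) * (2*r))
        (tendsto_const_nhds.add te) (by norm_num : (1:ℝ) + 0 ≠ 0)
      simpa using h6
    refine hlim.congr' ?_
    filter_upwards [Ioo_mem_nhdsGT_of_mem (Set.mem_Ico.mpr ⟨le_refl (0:ℝ), hb0⟩)] with r hr
    obtain ⟨h1, h2, h3, h4⟩ := hmem r hr
    have hθne : θ (2*r) ≠ 0 := (hθpos _ h4).ne'
    rw [he r hr]
    exact (div_mul_cancel_left₀ ((mul_pos two_pos (hθpos _ h4)).ne') _).symm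
  exact HasDerivAt.lhopital_zero_right_on_Ioo hb0 hff' hgg' hg' hfa hga hdiv


lemma q_int {r₀ : ℝ} {θ : ℝ → ℝ}
    (hθcont : ContinuousOn θ (Set.Ioo 0 r₀))
    (hθpos : ∀ r ∈ Set.Ioo (0:ℝ) r₀, 0 < θ r)
    (hθdec : StrictAntiOn θ (Set.Ioo 0 r₀)) :
    ∀ a b, 0 < a → a ≤ b → b ≤ r₀ → IntervalIntegrable (fun s => θ s / s) volume a b := by
  intro a b ha0 hab hbr₀
  rcases eq_or_lt_of_le hab with rfl | hab
  · exact IntervalIntegrable.refl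
  have har₀ : a ∈ Set.Ioo (0:ℝ) r₀ := ⟨ha0, lt_of_lt_of_le hab hbr₀⟩
  have hsub : Set.Ioo a b ⊆ Set.Ioo 0 r₀ :=
    fun s hs => ⟨lt_trans ha0 hs.1, lt_of_lt_of_le hs.2 hbr₀⟩
  have hcont : ContinuousOn (fun s => θ s / s) (Set.Ioo a b) := by
    refine ContinuousOn.div (hθcont.mono hsub) continuousOn_id ?_
    exact fun s hs => (lt_trans ha0 hs.1).ne'
  have hIoo : IntegrableOn (fun s => θ s / s) (Set.Ioo a b) := by
    refine Integrable.mono' (g := fun _ => θ a / a)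
      (integrableOn_const (C := θ a / a) (μ := volume) (s := Set.Ioo a b) measure_Ioo_lt_top.ne)
      (hcont.aestronglyMeasurable measurableSet_Ioo) ?_
    rw [ae_restrict_iff' measurableSet_Ioo]
    filter_upwards with s hs
    have hs' := hsub hs
    have h1 : θ s < θ a := hθdec har₀ hs' hs.1
    have h2 : 0 < θ s := hθpos s hs'
    rw [Real.norm_eq_abs, abs_of_pos (div_pos h2 hs'.1)]
    rw [div_le_div_iff₀ hs'.1 ha0]
    nlinarith [h1.le, hs.1.le, h2.le, (hθpos a har₀).le, ha0.le]
  rw [intervalIntegrable_iff_integrableOn_Ioc_of_le hab.le]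
  exact hIoo.congr_set_ae Ioo_ae_eq_Ioc.symm

lemma L_top {r₀ : ℝ} (hr₀ : 0 < r₀) {θ : ℝ → ℝ}
    (hθtop : Tendsto θ (nhdsWithin 0 (Set.Ioi 0)) atTop)
    (hθpos : ∀ r ∈ Set.Ioo (0:ℝ) r₀, 0 < θ r) :
    Tendsto (fun r => |Real.log r| * θ r) (nhdsWithin 0 (Set.Ioi 0)) atTop := by
  refine tendsto_atTop_mono' _ ?_ hθtop
  have hc : (0:ℝ) < min r₀ (Real.exp (-1)) := lt_min hr₀ (Real.exp_pos _)
  filter_upwards [Ioo_mem_nhdsGT_of_mem (Set.mem_Ico.mpr ⟨le_refl (0:ℝ), hc⟩)] with r hr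
  have hr0 : 0 < r := hr.1
  have hre : r < Real.exp (-1) := lt_of_lt_of_le hr.2 (min_le_right _ _)
  have hrr₀ : r < r₀ := lt_of_lt_of_le hr.2 (min_le_left _ _)
  have hlog : Real.log r < -1 := by
    have := Real.log_lt_log hr0 hre
    rwa [Real.log_exp] at this
  have h1 : 1 ≤ |Real.log r| := by
    rw [abs_of_neg (by linarith)]; linarith
  have h2 : 0 < θ r := hθpos r ⟨hr0, hrr₀⟩
  nlinarith

lemma part_b {r₀ : ℝ} (hr₀ : 0 < r₀) {θ : ℝ → ℝ}
    (hθdiff : ∀ x ∈ Set.Ioo (0:ℝ) r₀, HasDerivAt θ (deriv θ x) x)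
    (hθcont : ContinuousOn θ (Set.Ioo 0 r₀))
    (hθ'cont : ContinuousOn (deriv θ) (Set.Ioo 0 r₀))
    (hθpos : ∀ r ∈ Set.Ioo (0:ℝ) r₀, 0 < θ r)
    (hθdec : StrictAntiOn θ (Set.Ioo 0 r₀))
    (hθtop : Tendsto θ (nhdsWithin 0 (Set.Ioi 0)) atTop)
    (hlittleo : Tendsto (fun r => deriv θ r / θ r * (r * Real.log r))
      (nhdsWithin 0 (Set.Ioi 0)) (nhds 0)) :
    Tendsto (fun r => (∫ s in r..r₀, θ s / s) / (|Real.log r| * θ r))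
      (nhdsWithin 0 (Set.Ioi 0)) (nhds 1) := by
  have qInt := q_int hθcont hθpos hθdec
  rw [Metric.tendsto_nhds]
  intro δ hδ
  set η : ℝ := min (1/2) (δ/8) with hηdef
  have hη : 0 < η := lt_min (by norm_num) (by linarith)
  have hη2 : η ≤ 1/2 := min_le_left _ _
  have hη8 : η ≤ δ/8 := min_le_right _ _
  obtain ⟨δ₂, hδ₂, Hδ₂⟩ := aux_delta _ hlittleo hη
  set r₁ : ℝ := min δ₂ (min r₀ 1) / 2 with hr₁def
  have hr₁0 : 0 < r₁ := by
    have : 0 < min δ₂ (min r₀ 1) := lt_min hδ₂ (lt_min hr₀ one_pos)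
    positivity
  have hr₁δ₂ : r₁ < δ₂ := by
    have h1 : min δ₂ (min r₀ 1) ≤ δ₂ := min_le_left _ _
    have : 0 < min δ₂ (min r₀ 1) := lt_min hδ₂ (lt_min hr₀ one_pos)
    simp only [hr₁def]; linarith
  have hr₁r₀ : r₁ < r₀ := by
    have h1 : min δ₂ (min r₀ 1) ≤ r₀ := (min_le_right _ _).trans (min_le_left _ _)
    have : 0 < min δ₂ (min r₀ 1) := lt_min hδ₂ (lt_min hr₀ one_pos)
    simp only [hr₁def]; linarith
  have hr₁1 : r₁ < 1 := by
    have h1 : min δ₂ (min r₀ 1) ≤ 1 := (min_le_right _ _).trans (min_le_right _ _)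
    have : 0 < min δ₂ (min r₀ 1) := lt_min hδ₂ (lt_min hr₀ one_pos)
    simp only [hr₁def]; linarith
  have hε : ∀ s, 0 < s → s ≤ r₁ → |deriv θ s / θ s * (s * Real.log s)| ≤ η :=
    fun s hs0 hs1 => (Hδ₂ s hs0 (lt_of_le_of_lt hs1 hr₁δ₂)).le
  set c₁ : ℝ := Real.log r₁ * θ r₁ with hc₁def
  set C₀ : ℝ := ∫ s in r₁..r₀, θ s / s with hC₀def
  set M : ℝ := 2*η*|c₁| + |c₁| + |C₀| with hMdef
  have hM0 : 0 ≤ M := by positivity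
  -- the key FTC estimate
  have key : ∀ r, 0 < r → r < r₁ →
      |(∫ s in r..r₁, θ s / s) + Real.log r * θ r - c₁| ≤ η * ∫ s in r..r₁, θ s / s := by
    intro r hr0 hrr₁
    have hIccsub : Set.Icc r r₁ ⊆ Set.Ioo 0 r₀ :=
      fun x hx => ⟨lt_of_lt_of_le hr0 hx.1, lt_of_le_of_lt hx.2 hr₁r₀⟩
    set W : ℝ → ℝ := fun x => Real.log x * θ x - ∫ s in r₁..x, θ s / s with hWdef
    have hW : ∀ x ∈ Set.uIcc r r₁, HasDerivAt W (Real.log x * deriv θ x) x := by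
      intro x hx
      rw [Set.uIcc_of_le hrr₁.le] at hx
      have hx0 : 0 < x := lt_of_lt_of_le hr0 hx.1
      have hxr₀ : x ∈ Set.Ioo (0:ℝ) r₀ := hIccsub hx
      have hV : HasDerivAt (fun u => ∫ s in r₁..u, θ s / s) (θ x / x) x := by
        refine intervalIntegral.integral_hasDerivAt_right ?_ ?_ ?_
        · exact (qInt x r₁ hx0 hx.2 hr₁r₀.le).symm
        · refine ContinuousOn.stronglyMeasurableAtFilter (μ := volume) isOpen_Ioo
            (ContinuousOn.div hθcont continuousOn_id (fun s hs => hs.1.ne')) x hxr₀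
        · exact (ContinuousOn.div hθcont continuousOn_id
            (fun s hs => hs.1.ne')).continuousAt (isOpen_Ioo.mem_nhds hxr₀)
      have hlog : HasDerivAt (fun y => Real.log y * θ y)
          (x⁻¹ * θ x + Real.log x * deriv θ x) x :=
        (Real.hasDerivAt_log hx0.ne').mul (hθdiff x hxr₀)
      have hsub := hlog.sub hV
      rw [show Real.log x * deriv θ x = x⁻¹ * θ x + Real.log x * deriv θ x - θ x / x by
        rw [div_eq_inv_mul]; ring]
      exact hsub
    have hInt : IntervalIntegrable (fun s => Real.log s * deriv θ s) volume r r₁ := by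
      apply ContinuousOn.intervalIntegrable
      rw [Set.uIcc_of_le hrr₁.le]
      refine ContinuousOn.mul ?_ (hθ'cont.mono hIccsub)
      exact fun x hx => (Real.continuousAt_log (lt_of_lt_of_le hr0 hx.1).ne').continuousWithinAt
    have hFTC := intervalIntegral.integral_eq_sub_of_hasDerivAt hW hInt
    have hWr₁ : W r₁ = c₁ := by
      simp [hWdef, hc₁def, intervalIntegral.integral_same]
    have hWr : W r = Real.log r * θ r + ∫ s in r..r₁, θ s / s := by
      simp only [hWdef]
      rw [intervalIntegral.integral_symm]
      ring
    -- |∫ log * θ'| ≤ η * K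
    have hbound : |∫ s in r..r₁, Real.log s * deriv θ s| ≤ η * ∫ s in r..r₁, θ s / s := by
      have h1 := intervalIntegral.abs_integral_le_integral_abs (f := fun s => Real.log s * deriv θ s)
        (a := r) (b := r₁) (μ := volume) hrr₁.le
      have h2 : (∫ s in r..r₁, |Real.log s * deriv θ s|) ≤ ∫ s in r..r₁, η * (θ s / s) := by
        refine intervalIntegral.integral_mono_on hrr₁.le hInt.abs ((qInt r r₁ hr0 hrr₁.le hr₁r₀.le).const_mul η) ?_
        intro x hx
        have hx0 : 0 < x := lt_of_lt_of_le hr0 hx.1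
        have hxr₀ := hIccsub hx
        have hθx : 0 < θ x := hθpos x hxr₀
        have hx1 : x < 1 := lt_of_le_of_lt hx.2 hr₁1
        have hlogx : Real.log x ≠ 0 := (Real.log_neg hx0 hx1).ne
        have hid : Real.log x * deriv θ x
            = (deriv θ x / θ x * (x * Real.log x)) * (θ x / x) := by
          field_simp
        rw [hid, abs_mul, abs_of_pos (div_pos hθx hx0)]
        exact mul_le_mul_of_nonneg_right (hε x hx0 hx.2) (div_pos hθx hx0).le
      rw [intervalIntegral.integral_const_mul] at h2
      exact h1.trans h2
    rw [hFTC, hWr₁, hWr] at hbound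
    rw [show (∫ s in r..r₁, θ s / s) + Real.log r * θ r - c₁
        = -(c₁ - (Real.log r * θ r + ∫ s in r..r₁, θ s / s)) by ring, abs_neg]
    exact hbound
  -- now the eventual estimate
  have hLtop := L_top hr₀ hθtop hθpos
  filter_upwards [Ioo_mem_nhdsGT_of_mem (Set.mem_Ico.mpr ⟨le_refl (0:ℝ), hr₁0⟩),
    hLtop.eventually_ge_atTop (max 1 ((M+1)*(4/δ)))] with r hr hL
  have hr0 : 0 < r := hr.1
  have hrr₁ : r < r₁ := hr.2
  set L : ℝ := |Real.log r| * θ r with hLdef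
  have hL1 : 1 ≤ L := le_trans (le_max_left _ _) hL
  have hL2 : (M+1)*(4/δ) ≤ L := le_trans (le_max_right _ _) hL
  have hr1 : r < 1 := lt_trans hrr₁ hr₁1
  have hlogr : Real.log r < 0 := Real.log_neg hr0 hr1
  have hLeq : Real.log r * θ r = -L := by
    rw [hLdef, abs_of_neg hlogr]; ring
  set K : ℝ := ∫ s in r..r₁, θ s / s with hKdef
  have hK0 : 0 ≤ K := by
    refine intervalIntegral.integral_nonneg hrr₁.le ?_
    intro u hu
    have hu0 : 0 < u := lt_of_lt_of_le hr0 hu.1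
    exact (div_pos (hθpos u ⟨hu0, lt_of_le_of_lt hu.2 hr₁r₀⟩) hu0).le
  have hsplit : (∫ s in r..r₀, θ s / s) = K + C₀ := by
    rw [hKdef, hC₀def]
    exact (intervalIntegral.integral_add_adjacent_intervals
      (qInt r r₁ hr0 hrr₁.le hr₁r₀.le) (qInt r₁ r₀ hr₁0 hr₁r₀.le le_rfl)).symm
  have hkey := key r hr0 hrr₁
  rw [hLeq] at hkey
  -- |K - L - c₁| ≤ η K
  have hkey' : |K - L - c₁| ≤ η * K := by
    have : K + -L - c₁ = K - L - c₁ := by ring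
    rwa [this] at hkey
  have hKle : K ≤ 2*L + 2*|c₁| := by
    have h1 : K - L - c₁ ≤ η * K := (abs_le.mp hkey').2
    have h2 : η * K ≤ (1/2) * K := mul_le_mul_of_nonneg_right hη2 hK0
    have h3 : c₁ ≤ |c₁| := le_abs_self _
    linarith
  have hBL : |(K + C₀) - L| ≤ 2*η*L + M := by
    have h1 : |(K + C₀) - L| ≤ |K - L - c₁| + |c₁| + |C₀| := by
      have : (K + C₀) - L = (K - L - c₁) + c₁ + C₀ := by ring
      rw [this]
      calc |(K - L - c₁) + c₁ + C₀| ≤ |(K - L - c₁) + c₁| + |C₀| := abs_add_le _ _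
        _ ≤ |K - L - c₁| + |c₁| + |C₀| := by linarith [abs_add_le (K - L - c₁) c₁]
    have h2 : η * K ≤ η * (2*L + 2*|c₁|) := mul_le_mul_of_nonneg_left hKle hη.le
    have h4 : η * (2*L + 2*|c₁|) = 2*η*L + 2*η*|c₁| := by ring
    simp only [hMdef]
    linarith [hkey', h1, h2, h4]
  rw [Real.dist_eq, hsplit]
  have hLpos : 0 < L := lt_of_lt_of_le one_pos hL1
  have : (K + C₀) / L - 1 = ((K + C₀) - L) / L := by field_simp
  rw [this, abs_div, abs_of_pos hLpos]
  rw [div_lt_iff₀ hLpos]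
  have hML : M + 1 ≤ (δ/4) * L := by
    have hmul := mul_le_mul_of_nonneg_right hL2 (by positivity : (0:ℝ) ≤ δ/4)
    have heq : (M+1)*(4/δ)*(δ/4) = M+1 := by field_simp
    rw [heq] at hmul
    linarith [hmul, (by ring : L * (δ/4) = (δ/4)*L)]
  have e1 : 2*η*L ≤ (δ/4)*L := by
    have h5 : 2*η ≤ δ/4 := by linarith
    have := mul_le_mul_of_nonneg_right h5 hLpos.le
    linarith [this, (by ring : 2*η*L = (2*η)*L)]
  have e5 : 0 ≤ (δ/2)*L := by positivity
  have e6 : (δ/4)*L + (δ/4)*L + (δ/2)*L = δ*L := by ring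
  linarith [hBL, e1, hML, e5, e6, hM0]

/-- Calculus lemma: for a decreasing `C¹` gauge `θ` blowing up at `0` with
`θ'/θ = o(1/(r log r))`, setting `h(r) = r²θ(r)` one has
`∫₀^{2r} h/s² ∼ 2rθ(2r)`, `∫_r^{r₀} h/s³ ∼ |log r| θ(r)`, and consequently
`ψ(r) = ∫₀^{2r} h/s² + r ∫_r^{r₀} h/s³ = O(r |log r| θ(r))`. -/
theorem gauge_integral_asymptotics
    (r₀ : ℝ) (hr₀ : 0 < r₀)
    (θ : ℝ → ℝ)
    (hθC1 : ContDiffOn ℝ 1 θ (Set.Ioo 0 r₀))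
    (hθpos : ∀ r ∈ Set.Ioo (0:ℝ) r₀, 0 < θ r)
    (hθdec : StrictAntiOn θ (Set.Ioo 0 r₀))
    (hθtop : Tendsto θ (nhdsWithin 0 (Set.Ioi 0)) atTop)
    (hlittleo : Tendsto (fun r => deriv θ r / θ r * (r * Real.log r))
      (nhdsWithin 0 (Set.Ioi 0)) (nhds 0))
    (h : ℝ → ℝ) (hh : ∀ r, h r = r ^ 2 * θ r)
    (ψ : ℝ → ℝ)
    (hψ : ∀ r, ψ r = (∫ s in (0:ℝ)..(2*r), h s / s ^ 2) + r * ∫ s in r..r₀, h s / s ^ 3) :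
    Tendsto (fun r => (∫ s in (0:ℝ)..(2*r), h s / s ^ 2) / (2 * r * θ (2*r)))
        (nhdsWithin 0 (Set.Ioi 0)) (nhds 1) ∧
      Tendsto (fun r => (∫ s in r..r₀, h s / s ^ 3) / (|Real.log r| * θ r))
        (nhdsWithin 0 (Set.Ioi 0)) (nhds 1) ∧
      ∃ C : ℝ, ∀ᶠ r in nhdsWithin 0 (Set.Ioi 0), |ψ r| ≤ C * (r * |Real.log r| * θ r) := by
  -- basic regularity facts
  have hθdiff : ∀ x ∈ Set.Ioo (0:ℝ) r₀, HasDerivAt θ (deriv θ x) x := by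
    intro x hx
    exact ((hθC1.differentiableOn one_ne_zero).differentiableAt
      (isOpen_Ioo.mem_nhds hx)).hasDerivAt
  have hθcont : ContinuousOn θ (Set.Ioo 0 r₀) := hθC1.continuousOn
  have hθ'cont : ContinuousOn (deriv θ) (Set.Ioo 0 r₀) :=
    hθC1.continuousOn_deriv_of_isOpen isOpen_Ioo le_rfl
  obtain ⟨r₂, C, hr₂0, hr₂r₀, hr₂1, hC, hbd⟩ := log_bound hr₀ hθdiff hθpos hlittleo
  obtain ⟨hint, hF0⟩ := theta_int hr₂0 hr₂r₀ hr₂1 hC hθcont hθpos hbd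
  -- congruence with the h-forms of the integrals
  have hAeq : ∀ r : ℝ, (∫ s in (0:ℝ)..(2*r), h s / s ^ 2) = ∫ s in (0:ℝ)..(2*r), θ s := by
    intro r
    refine intervalIntegral.integral_congr_ae ?_
    have h0 : ∀ᵐ x : ℝ, x ≠ (0:ℝ) := by
      rw [ae_iff]
      have he : {x : ℝ | ¬ x ≠ 0} = {0} := by ext x; simp
      rw [he]
      exact Real.volume_singleton
    filter_upwards [h0] with x hx _
    rw [hh x]
    field_simp
  have hBeq : ∀ r : ℝ, 0 < r → (∫ s in r..r₀, h s / s ^ 3) = ∫ s in r..r₀, θ s / s := by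
    intro r hr
    refine intervalIntegral.integral_congr (fun x hx => ?_)
    have hx0 : 0 < x := by
      have := hx.1
      have hmin : 0 < min r r₀ := lt_min hr hr₀
      exact lt_of_lt_of_le hmin this
    rw [hh x]
    field_simp
  -- part (a)
  have TA : Tendsto (fun r => (∫ s in (0:ℝ)..(2*r), h s / s ^ 2) / (2 * r * θ (2*r)))
      (nhdsWithin 0 (Set.Ioi 0)) (nhds 1) := by
    have := part_a hr₀ hr₂0 hr₂r₀ hr₂1 hC hθdiff hθcont hθpos hlittleo hint hF0 hbd
    refine this.congr (fun r => ?_)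
    rw [hAeq r]
  -- part (b)
  have TB : Tendsto (fun r => (∫ s in r..r₀, h s / s ^ 3) / (|Real.log r| * θ r))
      (nhdsWithin 0 (Set.Ioi 0)) (nhds 1) := by
    have := part_b hr₀ hθdiff hθcont hθ'cont hθpos hθdec hθtop hlittleo
    refine this.congr' ?_
    filter_upwards [self_mem_nhdsWithin] with r hr
    rw [hBeq r (Set.mem_Ioi.mp hr)]
  refine ⟨TA, TB, ?_⟩
  -- part (c)
  have habslog : Tendsto (fun r : ℝ => |Real.log r|) (nhdsWithin 0 (Set.Ioi 0)) atTop := by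
    have h1 : Tendsto (fun r : ℝ => -Real.log r) (nhdsWithin 0 (Set.Ioi 0)) atTop :=
      tendsto_neg_atBot_atTop.comp Real.tendsto_log_nhdsGT_zero
    refine h1.congr' ?_
    filter_upwards [Ioo_mem_nhdsGT_of_mem (Set.mem_Ico.mpr ⟨le_refl (0:ℝ), one_pos⟩)] with r hr
    rw [abs_of_neg (Real.log_neg hr.1 hr.2)]
  -- the second factor tends to 0
  have hfac : Tendsto (fun r => 2 * θ (2*r) / (|Real.log r| * θ r))
      (nhdsWithin 0 (Set.Ioi 0)) (nhds 0) := by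
    have hup : Tendsto (fun r : ℝ => 2 / |Real.log r|) (nhdsWithin 0 (Set.Ioi 0)) (nhds 0) :=
      Filter.Tendsto.div_atTop tendsto_const_nhds habslog
    refine tendsto_of_tendsto_of_tendsto_of_le_of_le' tendsto_const_nhds hup ?_ ?_
    · filter_upwards [Ioo_mem_nhdsGT_of_mem
        (Set.mem_Ico.mpr ⟨le_refl (0:ℝ), (lt_min (by linarith : (0:ℝ) < r₀/2) one_pos : (0:ℝ) < min (r₀/2) 1)⟩)] with r hr
      have hr0 : 0 < r := hr.1
      have h2r : 2*r ∈ Set.Ioo (0:ℝ) r₀ := by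
        constructor
        · linarith
        · have := lt_of_lt_of_le hr.2 (min_le_left _ _); linarith
      have hrIoo : r ∈ Set.Ioo (0:ℝ) r₀ := ⟨hr0, by linarith [h2r.2]⟩
      have hθ2r : 0 < θ (2*r) := hθpos _ h2r
      have hθr : 0 < θ r := hθpos r hrIoo
      exact div_nonneg (by linarith) (mul_nonneg (abs_nonneg _) hθr.le)
    · filter_upwards [Ioo_mem_nhdsGT_of_mem
        (Set.mem_Ico.mpr ⟨le_refl (0:ℝ), (lt_min (by linarith : (0:ℝ) < r₀/2) one_pos : (0:ℝ) < min (r₀/2) 1)⟩)] with r hr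
      have hr0 : 0 < r := hr.1
      have hr1 : r < 1 := lt_of_lt_of_le hr.2 (min_le_right _ _)
      have h2r : 2*r ∈ Set.Ioo (0:ℝ) r₀ := by
        constructor
        · linarith
        · have := lt_of_lt_of_le hr.2 (min_le_left _ _); linarith
      have hrIoo : r ∈ Set.Ioo (0:ℝ) r₀ := ⟨hr0, by linarith [h2r.2]⟩
      have hθr : 0 < θ r := hθpos r hrIoo
      have hθ2r : 0 < θ (2*r) := hθpos _ h2r
      have hmono : θ (2*r) < θ r := hθdec hrIoo h2r (by linarith)
      have hlr : 0 < |Real.log r| := abs_pos.mpr (Real.log_neg hr0 hr1).ne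
      rw [div_le_div_iff₀ (by positivity) hlr]
      nlinarith
  have Tfirst : Tendsto (fun r => (∫ s in (0:ℝ)..(2*r), h s / s ^ 2)
      / (r * (|Real.log r| * θ r))) (nhdsWithin 0 (Set.Ioi 0)) (nhds 0) := by
    have hmul := TA.mul hfac
    rw [mul_zero] at hmul
    refine hmul.congr' ?_
    filter_upwards [Ioo_mem_nhdsGT_of_mem
      (Set.mem_Ico.mpr ⟨le_refl (0:ℝ), half_pos hr₀⟩)] with r hr
    have hr0 : 0 < r := hr.1
    have h2r : 2*r ∈ Set.Ioo (0:ℝ) r₀ := ⟨by linarith, by linarith [hr.2]⟩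
    have hθ2r : 0 < θ (2*r) := hθpos _ h2r
    rw [div_mul_div_comm,
      show (∫ s in (0:ℝ)..(2*r), h s / s ^ 2) * (2 * θ (2*r))
        = (2 * θ (2*r)) * (∫ s in (0:ℝ)..(2*r), h s / s ^ 2) by ring,
      show 2 * r * θ (2*r) * (|Real.log r| * θ r)
        = (2 * θ (2*r)) * (r * (|Real.log r| * θ r)) by ring,
      mul_div_mul_left _ _ (mul_pos two_pos hθ2r).ne']
  have Tψ : Tendsto (fun r => ψ r / (r * (|Real.log r| * θ r)))
      (nhdsWithin 0 (Set.Ioi 0)) (nhds 1) := by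
    have hsum := Tfirst.add TB
    rw [zero_add] at hsum
    refine hsum.congr' ?_
    filter_upwards [self_mem_nhdsWithin] with r hr
    have hr0 : 0 < r := Set.mem_Ioi.mp hr
    rw [hψ r, add_div]
    congr 1
    rw [mul_div_mul_left _ _ hr0.ne']
  refine ⟨2, ?_⟩
  have hev := Metric.tendsto_nhds.mp Tψ 1 one_pos
  filter_upwards [hev, Ioo_mem_nhdsGT_of_mem
    (Set.mem_Ico.mpr ⟨le_refl (0:ℝ), (lt_min hr₀ one_pos : (0:ℝ) < min r₀ 1)⟩)] with r hd hr
  have hr0 : 0 < r := hr.1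
  have hr1 : r < 1 := lt_of_lt_of_le hr.2 (min_le_right _ _)
  have hrr₀ : r < r₀ := lt_of_lt_of_le hr.2 (min_le_left _ _)
  have hθr : 0 < θ r := hθpos r ⟨hr0, hrr₀⟩
  have hlr : 0 < |Real.log r| := abs_pos.mpr (Real.log_neg hr0 hr1).ne
  set D : ℝ := r * (|Real.log r| * θ r) with hD
  have hDpos : 0 < D := mul_pos hr0 (mul_pos hlr hθr)
  rw [Real.dist_eq] at hd
  have h1 : |ψ r / D| < 2 := by
    have habs := abs_lt.mp hd
    rw [abs_lt]
    exact ⟨by linarith [habs.1], by linarith [habs.2]⟩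
  have h2 : |ψ r| = |ψ r / D| * D := by
    rw [abs_div, abs_of_pos hDpos, div_mul_cancel₀ _ hDpos.ne']
  have h3 : |ψ r| ≤ 2 * D := by
    rw [h2]
    exact mul_le_mul_of_nonneg_right h1.le hDpos.le
  calc |ψ r| ≤ 2 * D := h3
    _ = 2 * (r * |Real.log r| * θ r) := by rw [hD]; ring
end

section
/- Let F : [x₀, ∞) → (0, ∞) be a function increasing to +∞. Then there exists a C¹ function G : [x₁, ∞) → (0, ∞) with G ≤ F, G increasing to +∞, and G'(x)/G(x) = o(1/(x·log x)) as x → ∞. -/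
open Filter


noncomputable def bump (t : ℝ) : ℝ := max 0 (t * (1 - t))

lemma bump_cont : Continuous bump := continuous_const.max (by continuity)
lemma bump_nonneg (t : ℝ) : 0 ≤ bump t := le_max_left _ _
lemma bump_le_one (t : ℝ) : bump t ≤ 1 := by
  rcases le_or_gt (t * (1 - t)) 0 with h | h
  · simp [bump, h]
  · have : t * (1 - t) ≤ 1 := by nlinarith [sq_nonneg (2*t-1)]
    exact max_le (by norm_num) this

noncomputable def step (u : ℝ) : ℝ := 6 * ∫ t in (0:ℝ)..u, bump t

lemma step_hasDerivAt (u : ℝ) : HasDerivAt step (6 * bump u) u := by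
  have h := (intervalIntegral.integral_hasStrictDerivAt_right
    (bump_cont.intervalIntegrable 0 u) (bump_cont.stronglyMeasurableAtFilter _ _)
    bump_cont.continuousAt).hasDerivAt
  exact (h.const_mul 6)

lemma step_deriv (u : ℝ) : deriv step u = 6 * bump u := (step_hasDerivAt u).deriv

lemma step_contDiff : ContDiff ℝ 1 step := by
  rw [contDiff_one_iff_deriv]
  refine ⟨fun u => (step_hasDerivAt u).differentiableAt, ?_⟩
  have : deriv step = fun u => 6 * bump u := funext step_deriv
  rw [this]; exact continuous_const.mul bump_cont

lemma step_mono : Monotone step := by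
  intro a b hab
  have h : ∀ u, 0 ≤ 6 * bump u := fun u => by
    have := bump_nonneg u; linarith
  exact monotone_of_deriv_nonneg (fun u => (step_hasDerivAt u).differentiableAt)
    (fun u => by rw [step_deriv]; exact h u) hab

lemma step_of_nonpos {u : ℝ} (hu : u ≤ 0) : step u = 0 := by
  have : ∫ t in (0:ℝ)..u, bump t = ∫ t in (0:ℝ)..u, (0:ℝ) := by
    apply intervalIntegral.integral_congr
    intro t ht
    rw [Set.uIcc_of_ge hu] at ht
    have h1 : t ≤ 0 := ht.2
    have : t * (1 - t) ≤ 0 := mul_nonpos_iff.2 (Or.inr ⟨h1, by linarith⟩)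
    simp [bump, this]
  simp [step, this]

lemma integral_bump_01 : ∫ t in (0:ℝ)..1, bump t = 1/6 := by
  have : ∫ t in (0:ℝ)..1, bump t = ∫ t in (0:ℝ)..1, (t - t^2) := by
    apply intervalIntegral.integral_congr
    intro t ht
    rw [Set.uIcc_of_le zero_le_one] at ht
    have : 0 ≤ t * (1 - t) := mul_nonneg ht.1 (by linarith [ht.2])
    simp [bump, max_eq_right this]; ring
  rw [this, intervalIntegral.integral_sub (by apply Continuous.intervalIntegrable; continuity)
    (by apply Continuous.intervalIntegrable; continuity)]
  rw [integral_id, integral_pow]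
  norm_num

lemma step_of_one_le {u : ℝ} (hu : 1 ≤ u) : step u = 1 := by
  have hsplit : ∫ t in (0:ℝ)..u, bump t
      = (∫ t in (0:ℝ)..1, bump t) + ∫ t in (1:ℝ)..u, bump t :=
    (intervalIntegral.integral_add_adjacent_intervals
      (bump_cont.intervalIntegrable 0 1) (bump_cont.intervalIntegrable 1 u)).symm
  have h2 : ∫ t in (1:ℝ)..u, bump t = 0 := by
    have : ∫ t in (1:ℝ)..u, bump t = ∫ t in (1:ℝ)..u, (0:ℝ) := by
      apply intervalIntegral.integral_congr
      intro t ht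
      rw [Set.uIcc_of_le hu] at ht
      have : t * (1 - t) ≤ 0 := mul_nonpos_iff.2 (Or.inl ⟨by linarith [ht.1], by linarith [ht.1]⟩)
      simp [bump, this]
    simp [this]
  rw [step, hsplit, h2, integral_bump_01]; norm_num

lemma step_nonneg (u : ℝ) : 0 ≤ step u := by
  rcases le_or_gt u 0 with h | h
  · rw [step_of_nonpos h]
  · rw [← step_of_nonpos le_rfl]; exact step_mono h.le

lemma step_le_one (u : ℝ) : step u ≤ 1 := by
  rcases le_or_gt 1 u with h | h
  · rw [step_of_one_le h]
  · rw [← step_of_one_le le_rfl]; exact step_mono h.le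


section
variable (c : ℕ → ℝ)

noncomputable def nfun (t : ℝ) : ℕ := sSup {n : ℕ | c n ≤ t}

noncomputable def stairs (t : ℝ) : ℝ := (nfun c t : ℝ) + 1 + step (t - c (nfun c t))

variable {c} (hc : ∀ n, c n + 2 ≤ c (n + 1))
include hc

lemma c_strictMono : StrictMono c :=
  strictMono_nat_of_lt_succ fun n => by linarith [hc n]

lemma c_lower (n : ℕ) : c 0 + 2 * n ≤ c n := by
  induction n with
  | zero => simp
  | succ k ih => have := hc k; push_cast; linarith

lemma c_bddAbove (t : ℝ) : BddAbove {n : ℕ | c n ≤ t} := by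
  rcases exists_nat_gt ((t - c 0) / 2) with ⟨N, hN⟩
  refine ⟨N, fun n hn => ?_⟩
  by_contra h
  push_neg at h
  have h2 := c_lower hc n
  have : (N:ℝ) < n := by exact_mod_cast h
  simp only [Set.mem_setOf_eq] at hn
  have := (div_lt_iff₀ (by norm_num : (0:ℝ) < 2)).1 hN
  linarith

lemma nfun_ge {K : ℕ} {t : ℝ} (h : c K ≤ t) : K ≤ nfun c t :=
  le_csSup (c_bddAbove hc t) h

lemma nfun_eq {m : ℕ} {t : ℝ} (h1 : c m ≤ t) (h2 : t < c (m + 1)) : nfun c t = m := by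
  refine le_antisymm (csSup_le ⟨m, h1⟩ fun k hk => ?_) (nfun_ge hc h1)
  simp only [Set.mem_setOf_eq] at hk
  by_contra hkm
  push_neg at hkm
  exact absurd ((c_strictMono hc).le_iff_le.2 hkm) (not_le.2 (lt_of_le_of_lt hk h2))

lemma nfun_zero {t : ℝ} (h : t < c 0) : nfun c t = 0 := by
  have : {n : ℕ | c n ≤ t} = ∅ := by
    ext n; simp only [Set.mem_setOf_eq, Set.mem_empty_iff_false, iff_false, not_le]
    exact lt_of_lt_of_le h ((c_strictMono hc).monotone (Nat.zero_le n))
  simp [nfun, this]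

/-- Local model for the staircase. -/
lemma stairs_localmodel (t : ℝ) : ∃ (m : ℕ) (U : Set ℝ), IsOpen U ∧ t ∈ U ∧
    Set.EqOn (stairs c) (fun u => (m : ℝ) + 1 + step (u - c m)) U := by
  rcases lt_or_ge t (c 1) with h1 | h1
  · -- model m = 0 on Iio (c 1)
    refine ⟨0, Set.Iio (c 1), isOpen_Iio, h1, fun u hu => ?_⟩
    simp only [Set.mem_Iio] at hu
    rcases lt_or_ge u (c 0) with h0 | h0
    · simp [stairs, nfun_zero hc h0]
    · simp [stairs, nfun_eq hc h0 hu]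
  · -- t ≥ c 1 : let m = nfun c t ≥ 1, model on Ioo (c m - 1) (c (m+1))
    set m := nfun c t with hm
    have hmem : c m ≤ t := by
      have : m ∈ {n : ℕ | c n ≤ t} := Nat.sSup_mem ⟨1, h1⟩ (c_bddAbove hc t)
      exact this
    have hm1 : 1 ≤ m := nfun_ge hc h1
    have htlt : t < c (m + 1) := by
      by_contra h
      push_neg at h
      have := nfun_ge hc h
      omega
    clear_value m
    refine ⟨m, Set.Ioo (c m - 1) (c (m + 1)), isOpen_Ioo, ⟨by linarith, htlt⟩, fun u hu => ?_⟩
    rcases le_or_gt (c m) u with h0 | h0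
    · simp [stairs, nfun_eq hc h0 hu.2]
    · -- u ∈ (c m - 1, c m): nfun = m - 1, steps saturate
      obtain ⟨k, rfl⟩ : ∃ k, m = k + 1 := ⟨m - 1, by omega⟩
      have hk1 : c k ≤ u := by have := hc k; linarith [hu.1]
      have heq : nfun c u = k := nfun_eq hc hk1 h0
      have hs1 : step (u - c k) = 1 := step_of_one_le (by have := hc k; linarith [hu.1])
      have hs0 : step (u - c (k + 1)) = 0 := step_of_nonpos (by linarith)
      simp only [stairs, heq, hs1, hs0]
      push_cast; ring

lemma stairs_hasDerivAt (t : ℝ) : ∃ m : ℕ, HasDerivAt (stairs c) (6 * bump (t - c m)) t := by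
  obtain ⟨m, U, hUo, htU, heq⟩ := stairs_localmodel hc t
  have hmod : HasDerivAt (fun u => (m : ℝ) + 1 + step (u - c m)) (6 * bump (t - c m)) t := by
    have h := (step_hasDerivAt (t - c m)).comp t ((hasDerivAt_id t).sub_const (c m))
    simpa using h.const_add ((m : ℝ) + 1)
  exact ⟨m, hmod.congr_of_eventuallyEq
    (Filter.eventuallyEq_iff_exists_mem.2 ⟨U, hUo.mem_nhds htU, heq⟩)⟩

lemma stairs_deriv_bounds (t : ℝ) : 0 ≤ deriv (stairs c) t ∧ deriv (stairs c) t ≤ 6 := by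
  obtain ⟨m, hd⟩ := stairs_hasDerivAt hc t
  rw [hd.deriv]
  constructor
  · have := bump_nonneg (t - c m); linarith
  · have := bump_le_one (t - c m); linarith

lemma stairs_differentiable : Differentiable ℝ (stairs c) := fun t => by
  obtain ⟨m, hd⟩ := stairs_hasDerivAt hc t
  exact hd.differentiableAt

lemma stairs_contDiffAt (t : ℝ) : ContDiffAt ℝ 1 (stairs c) t := by
  obtain ⟨m, U, hUo, htU, heq⟩ := stairs_localmodel hc t
  have hmodel : ContDiffAt ℝ 1 (fun u => (m : ℝ) + 1 + step (u - c m)) t := by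
    exact (contDiffAt_const.add ((step_contDiff.contDiffAt).comp t
      ((contDiffAt_id.sub contDiffAt_const))))
  exact hmodel.congr_of_eventuallyEq
    (Filter.eventuallyEq_iff_exists_mem.2 ⟨U, hUo.mem_nhds htU, heq⟩)

lemma stairs_mono : Monotone (stairs c) :=
  monotone_of_deriv_nonneg (stairs_differentiable hc)
    (fun t => (stairs_deriv_bounds hc t).1)

lemma stairs_ge {K : ℕ} {t : ℝ} (h : c K ≤ t) : (K : ℝ) + 1 ≤ stairs c t := by
  have h1 : (K : ℝ) ≤ nfun c t := by exact_mod_cast nfun_ge hc h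
  have := step_nonneg (t - c (nfun c t))
  simp only [stairs]; linarith

omit hc in
lemma stairs_pos (t : ℝ) : 0 < stairs c t := by
  have := step_nonneg (t - c (nfun c t))
  have : (0:ℝ) ≤ (nfun c t : ℝ) := Nat.cast_nonneg _
  simp only [stairs]
  have := step_nonneg (t - c (nfun c t))
  positivity

omit hc in
lemma stairs_le (t : ℝ) : stairs c t ≤ (nfun c t : ℝ) + 2 := by
  have := step_le_one (t - c (nfun c t))
  simp only [stairs]; linarith

lemma stairs_tendsto : Tendsto (stairs c) atTop atTop := by
  rw [tendsto_atTop]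
  intro b
  filter_upwards [eventually_ge_atTop (c ⌈b⌉₊)] with t ht
  calc b ≤ ⌈b⌉₊ := Nat.le_ceil b
    _ ≤ (⌈b⌉₊ : ℝ) + 1 := by linarith
    _ ≤ stairs c t := stairs_ge hc ht

end


/-- Below any function `F` increasing to `+∞` one can find a `C¹` function `G` increasing
to `+∞` with `G'/G = o(1/(x log x))` at infinity. -/
theorem exists_slow_minorant
    (x₀ : ℝ) (F : ℝ → ℝ)
    (hFpos : ∀ x ∈ Set.Ici x₀, 0 < F x)
    (hFmono : MonotoneOn F (Set.Ici x₀))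
    (hFtop : Tendsto F atTop atTop) :
    ∃ (x₁ : ℝ) (G : ℝ → ℝ), x₀ ≤ x₁ ∧
      ContDiffOn ℝ 1 G (Set.Ici x₁) ∧
      (∀ x ∈ Set.Ici x₁, 0 < G x) ∧
      (∀ x ∈ Set.Ici x₁, G x ≤ F x) ∧
      MonotoneOn G (Set.Ici x₁) ∧
      Tendsto G atTop atTop ∧
      Tendsto (fun x => deriv G x / G x * (x * Real.log x)) atTop (nhds 0) := by
  classical
  -- thresholds for F
  have hthr : ∀ n : ℕ, ∃ T : ℝ, ∀ x ≥ T, (n : ℝ) + 2 ≤ F x := by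
    intro n
    have h := hFtop.eventually (eventually_ge_atTop ((n : ℝ) + 2))
    rw [eventually_atTop] at h
    obtain ⟨T, hT⟩ := h
    exact ⟨T, fun x hx => hT x hx⟩
  choose d hd using hthr
  set M : ℕ → ℝ := fun n => max (max (d n) x₀) (Real.exp (Real.exp 1)) with hM
  have hMpos : ∀ n, 0 < M n := fun n =>
    lt_of_lt_of_le (Real.exp_pos _) (le_max_right _ _)
  have hMone : ∀ n, 1 < M n := fun n =>
    lt_of_lt_of_le (by
      have : (0:ℝ) < Real.exp 1 := Real.exp_pos 1
      calc (1:ℝ) < Real.exp (Real.exp 1) := Real.one_lt_exp_iff.2 (by positivity)) (le_max_right _ _)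
  set eF : ℕ → ℝ := fun n => Real.log (Real.log (M n)) with heF
  have hexp : ∀ n, Real.exp (Real.exp (eF n)) = M n := by
    intro n
    have h2 : 0 < Real.log (M n) := Real.log_pos (hMone n)
    simp only [heF]
    rw [Real.exp_log h2, Real.exp_log (hMpos n)]
  -- the sequence of junction points
  set c : ℕ → ℝ := fun n => Nat.rec (eF 0) (fun n cn => max (eF (n + 1)) (cn + 2)) n with hcdef
  have hc : ∀ n, c n + 2 ≤ c (n + 1) := fun n => le_max_right _ _
  have hce : ∀ n, eF n ≤ c n := by
    intro n
    cases n with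
    | zero => exact le_rfl
    | succ k => exact le_max_left _ _
  have hMle : ∀ n, M n ≤ Real.exp (Real.exp (c n)) := by
    intro n
    rw [← hexp n]
    exact Real.exp_le_exp.2 (Real.exp_le_exp.2 (hce n))
  set x₁ : ℝ := Real.exp (Real.exp (c 0)) with hx₁
  have hx₁M : M 0 ≤ x₁ := hMle 0
  have hx₁e : Real.exp (Real.exp 1) ≤ x₁ :=
    le_trans (le_max_right _ _) hx₁M
  -- basic facts for x ≥ x₁
  have hxfacts : ∀ x : ℝ, x₁ ≤ x → 0 < x ∧ 1 < Real.log x := by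
    intro x hx
    have h1 : Real.exp (Real.exp 1) ≤ x := le_trans hx₁e hx
    have hx0 : 0 < x := lt_of_lt_of_le (Real.exp_pos _) h1
    constructor
    · exact hx0
    · have : Real.exp 1 ≤ Real.log x := by
        rw [← Real.log_exp (Real.exp 1)]
        exact Real.log_le_log (Real.exp_pos _) h1
      calc (1:ℝ) < Real.exp 1 := Real.one_lt_exp_iff.2 one_pos
        _ ≤ Real.log x := this
  set L : ℝ → ℝ := fun x => Real.log (Real.log x) with hL
  -- inversion
  have hinv : ∀ x : ℝ, x₁ ≤ x → Real.exp (Real.exp (L x)) = x := by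
    intro x hx
    obtain ⟨hx0, hlx⟩ := hxfacts x hx
    simp only [hL]
    rw [Real.exp_log (by linarith : (0:ℝ) < Real.log x), Real.exp_log hx0]
  have hc0L : ∀ x : ℝ, x₁ ≤ x → c 0 ≤ L x := by
    intro x hx
    obtain ⟨hx0, hlx⟩ := hxfacts x hx
    have h1 : Real.exp (c 0) ≤ Real.log x := by
      rw [← Real.log_exp (Real.exp (c 0))]
      exact Real.log_le_log (Real.exp_pos _) hx
    calc c 0 = Real.log (Real.exp (c 0)) := (Real.log_exp _).symm
      _ ≤ Real.log (Real.log x) := Real.log_le_log (Real.exp_pos _) h1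
  have hcmx : ∀ (m : ℕ) (x : ℝ), x₁ ≤ x → c m ≤ L x → Real.exp (Real.exp (c m)) ≤ x := by
    intro m x hx hcm
    rw [← hinv x hx]
    exact Real.exp_le_exp.2 (Real.exp_le_exp.2 hcm)
  set G : ℝ → ℝ := fun x => stairs c (L x) with hG
  have hx₀x₁ : x₀ ≤ x₁ := le_trans (le_trans (le_max_right _ _) (le_max_left _ _)) hx₁M
  refine ⟨x₁, G, hx₀x₁, ?_, ?_, ?_, ?_, ?_, ?_⟩
  · -- ContDiffOn
    intro x hx
    obtain ⟨hx0, hlx⟩ := hxfacts x hx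
    have h1 : ContDiffAt ℝ 1 Real.log x := Real.contDiffAt_log.2 hx0.ne'
    have h2 : ContDiffAt ℝ 1 Real.log (Real.log x) :=
      Real.contDiffAt_log.2 (by linarith : (0:ℝ) < Real.log x).ne'
    exact ((stairs_contDiffAt hc (L x)).comp x (h2.comp x h1)).contDiffWithinAt
  · -- positivity
    intro x _
    exact stairs_pos (L x)
  · -- G ≤ F
    intro x hx
    simp only [Set.mem_Ici] at hx
    set m : ℕ := nfun c (L x) with hm
    have hcm : c m ≤ L x := Nat.sSup_mem ⟨0, hc0L x hx⟩ (c_bddAbove hc (L x))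
    have hxd : d m ≤ x :=
      le_trans (le_trans (le_max_left _ _) (le_max_left _ _))
        (le_trans (hMle m) (hcmx m x hx hcm))
    calc G x ≤ (m : ℝ) + 2 := stairs_le (L x)
      _ ≤ F x := hd m x hxd
  · -- monotone
    intro a ha b hb hab
    simp only [Set.mem_Ici] at ha hb
    obtain ⟨ha0, hla⟩ := hxfacts a ha
    apply stairs_mono hc
    have h1 : Real.log a ≤ Real.log b := Real.log_le_log ha0 hab
    exact Real.log_le_log (by linarith) h1
  · -- tendsto atTop
    exact (stairs_tendsto hc).comp (Real.tendsto_log_atTop.comp Real.tendsto_log_atTop)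
  · -- the o(1/(x log x)) condition
    rw [NormedAddCommGroup.tendsto_nhds_zero]
    intro ε hε
    set K : ℕ := ⌈6 / ε⌉₊ with hK
    have hKε : 6 / ((K : ℝ) + 1) < ε := by
      have h1 : 6 / ε ≤ (K : ℝ) := Nat.le_ceil _
      rw [div_lt_iff₀ (by positivity)]
      have : 6 / ε < (K : ℝ) + 1 := by linarith
      calc (6:ℝ) = ε * (6 / ε) := by field_simp
        _ < ε * ((K : ℝ) + 1) := by
            apply mul_lt_mul_of_pos_left _ hε
            linarith
    filter_upwards [eventually_ge_atTop x₁,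
      eventually_ge_atTop (Real.exp (Real.exp (c K)))] with x hx hxK
    obtain ⟨hx0, hlx⟩ := hxfacts x hx
    -- c K ≤ L x
    have hcKL : c K ≤ L x := by
      have h1 : Real.exp (c K) ≤ Real.log x := by
        rw [← Real.log_exp (Real.exp (c K))]
        exact Real.log_le_log (Real.exp_pos _) hxK
      calc c K = Real.log (Real.exp (c K)) := (Real.log_exp _).symm
        _ ≤ Real.log (Real.log x) := Real.log_le_log (Real.exp_pos _) h1
    have hGge : (K : ℝ) + 1 ≤ G x := stairs_ge hc hcKL
    have hGpos : 0 < G x := stairs_pos (L x)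
    -- derivative computation
    obtain ⟨m, hds⟩ := stairs_hasDerivAt hc (L x)
    set D : ℝ := 6 * bump (L x - c m) with hD
    have hll : HasDerivAt L ((Real.log x)⁻¹ * x⁻¹) x :=
      (Real.hasDerivAt_log (by linarith : (0:ℝ) < Real.log x).ne').comp x
        (Real.hasDerivAt_log hx0.ne')
    have hGd : HasDerivAt G (D * ((Real.log x)⁻¹ * x⁻¹)) x := hds.comp x hll
    have hderiv : deriv G x = D * ((Real.log x)⁻¹ * x⁻¹) := hGd.deriv
    have hquot : deriv G x / G x * (x * Real.log x) = D / G x := by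
      rw [hderiv]
      have hlx0 : Real.log x ≠ 0 := by linarith
      field_simp
    rw [hquot]
    have hD0 : 0 ≤ D := by have := bump_nonneg (L x - c m); linarith
    have hD6 : D ≤ 6 := by have := bump_le_one (L x - c m); linarith
    rw [Real.norm_eq_abs, abs_of_nonneg (by positivity)]
    calc D / G x ≤ 6 / ((K : ℝ) + 1) :=
          div_le_div₀ (by norm_num) hD6 (by positivity) hGge
      _ < ε := hKε
end

section
/- Let ψ : (0, r₀) → (0, ∞) be continuous increasing with ψ(0⁺) = 0 and ψ(r)/(r·|log r|) → ∞ as r → 0⁺. Then there exists a decreasing function θ : (0, r₁) → (0, ∞) with θ(r) → ∞ as r → 0⁺ such that h(r) := r²θ(r) is increasing near 0, satisfies ∫₀ h(s)/s² ds < ∞, and ∫₀^{2r} h(s)/s² ds + r ∫_r^{r₁} h(s)/s³ ds = O(ψ(r)) as r → 0⁺. -/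
open Filter MeasureTheory
open Set intervalIntegral

lemma neg_log_integrable_and_value {t : ℝ} (ht : 0 < t) (ht1 : t ≤ 1) :
    IntervalIntegrable (fun s => -Real.log s) volume 0 t ∧
    (∫ s in (0:ℝ)..t, -Real.log s) = t - t * Real.log t := by
  have key : IntegrableOn (fun s => -Real.log s) (Set.Ioc 0 t) volume := by
    have ha : Tendsto (fun n : ℕ => t / ((n : ℝ) + 2)) atTop (nhds 0) := by
      apply Tendsto.div_atTop tendsto_const_nhds
      exact tendsto_atTop_add_const_right atTop 2 tendsto_natCast_atTop_atTop
    have hapos : ∀ n : ℕ, 0 < t / ((n : ℝ) + 2) := fun n =>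
      div_pos ht (by positivity)
    have hale : ∀ n : ℕ, t / ((n : ℝ) + 2) ≤ t := fun n => by
      rw [div_le_iff₀ (by positivity)]
      nlinarith
    have hnot : ∀ n : ℕ, (0 : ℝ) ∉ Set.uIcc (t / ((n : ℝ) + 2)) t := by
      intro n h
      rw [Set.mem_uIcc] at h
      rcases h with ⟨h1, _⟩ | ⟨h1, _⟩
      · exact absurd h1 (not_le.mpr (hapos n))
      · exact absurd h1 (not_le.mpr ht)
    refine integrableOn_Ioc_of_intervalIntegral_norm_bounded_left
      (f := fun s => -Real.log s) (a := fun n : ℕ => t / ((n : ℝ) + 2))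
      (I := t - t * Real.log t) (b := t) (l := atTop) (fun n => ?_) ha ?_
    · exact (intervalIntegrable_iff_integrableOn_Ioc_of_le (hale n)).mp
        ((intervalIntegrable_log (hnot n)).neg)
    · filter_upwards with n
      set a := t / ((n : ℝ) + 2) with hadef
      have h1 : (∫ x in Set.Ioc a t, ‖-Real.log x‖) = ∫ x in Set.Ioc a t, -Real.log x := by
        apply setIntegral_congr_fun measurableSet_Ioc
        intro x hx
        have hx0 : 0 < x := lt_of_lt_of_le (hapos n) hx.1.le
        have : Real.log x ≤ 0 := Real.log_nonpos hx0.le (hx.2.trans ht1)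
        show ‖-Real.log x‖ = -Real.log x
        rw [Real.norm_eq_abs, abs_of_nonneg (by linarith)]
      rw [h1, ← intervalIntegral.integral_of_le (hale n), intervalIntegral.integral_neg,
        integral_log]
      have hla : Real.log a ≤ 0 := Real.log_nonpos (hapos n).le ((hale n).trans ht1)
      have ha0 : 0 < a := hapos n
      nlinarith [mul_nonpos_of_nonneg_of_nonpos ha0.le hla]
  constructor
  · exact (intervalIntegrable_iff_integrableOn_Ioc_of_le ht.le).mpr key
  · have := intervalIntegral.integral_eq_sub_of_hasDeriv_right_of_le
      (f := fun s => s - s * Real.log s)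
      (f' := fun s => -Real.log s) ht.le
      ((continuous_id.sub Real.continuous_mul_log).continuousOn)
      (fun x hx => by
        have h := (hasDerivAt_id x).sub (Real.hasDerivAt_mul_log hx.1.ne')
        have h2 : (1 : ℝ) - (Real.log x + 1) = -Real.log x := by ring
        rw [h2] at h
        exact h.hasDerivWithinAt)
      ((intervalIntegrable_iff_integrableOn_Ioc_of_le ht.le).mpr key)
    simpa using this

set_option maxHeartbeats 1000000 in

/-- Any gauge `ψ` with `ψ(r)/(r|log r|) → ∞` is achievable: there is a decreasing `θ`
blowing up at `0` such that `h(r) = r²θ(r)` is increasing near `0`, satisfies the Dini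
condition `∫₀ h(s)/s² ds < ∞`, and
`∫₀^{2r} h(s)/s² ds + r ∫_r^{r₁} h(s)/s³ ds = O(ψ(r))` as `r → 0⁺`. -/
theorem exists_gauge_density
    (r₀ : ℝ) (hr₀ : 0 < r₀)
    (ψ : ℝ → ℝ)
    (hψcont : ContinuousOn ψ (Set.Ioo 0 r₀))
    (hψpos : ∀ r ∈ Set.Ioo (0:ℝ) r₀, 0 < ψ r)
    (hψmono : MonotoneOn ψ (Set.Ioo 0 r₀))
    (hψ0 : Tendsto ψ (nhdsWithin 0 (Set.Ioi 0)) (nhds 0))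
    (hψfast : Tendsto (fun r => ψ r / (r * |Real.log r|)) (nhdsWithin 0 (Set.Ioi 0)) atTop) :
    ∃ (r₁ : ℝ) (θ : ℝ → ℝ), 0 < r₁ ∧ r₁ ≤ r₀ ∧
      (∀ r ∈ Set.Ioo (0:ℝ) r₁, 0 < θ r) ∧
      AntitoneOn θ (Set.Ioo 0 r₁) ∧
      Tendsto θ (nhdsWithin 0 (Set.Ioi 0)) atTop ∧
      MonotoneOn (fun r => r ^ 2 * θ r) (Set.Ioo 0 r₁) ∧
      IntervalIntegrable (fun s => (s ^ 2 * θ s) / s ^ 2) volume 0 r₁ ∧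
      ∃ C : ℝ, ∀ᶠ r in nhdsWithin 0 (Set.Ioi 0),
        (∫ s in (0:ℝ)..(2*r), (s ^ 2 * θ s) / s ^ 2) +
          r * ∫ s in r..r₁, (s ^ 2 * θ s) / s ^ 3 ≤ C * ψ r := by
  -- choice of r₁
  set r₁ : ℝ := min (r₀ / 2) (1 / 2) with hr₁def
  have hr₁pos : 0 < r₁ := lt_min (by linarith) (by norm_num)
  have hr₁ltr₀ : r₁ < r₀ := lt_of_le_of_lt (min_le_left _ _) (by linarith)
  have hr₁half : r₁ ≤ 1 / 2 := min_le_right _ _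
  have hr₁lt1 : r₁ < 1 := lt_of_le_of_lt hr₁half (by norm_num)
  -- the basic functions
  set ω : ℝ → ℝ := fun s => ψ s / (s * |Real.log s|) with hω
  set ωt : ℝ → ℝ := fun r => sInf (ω '' Set.Ioc 0 r) with hωt
  set f : ℝ → ℝ := fun s => min (max (ωt s) 1) (max (-Real.log s) 0) with hf
  set g : ℝ → ℝ := fun s => s ^ 2 * f s with hg
  set H : ℝ → ℝ := fun r => sInf (g '' Set.Icc (min r r₁) r₁) with hH
  set θ : ℝ → ℝ := fun r => H r / r ^ 2 with hθ
  -- basic properties of ω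
  have hωnn : ∀ s ∈ Set.Ioc (0:ℝ) r₁, 0 ≤ ω s := by
    intro s hs
    exact div_nonneg (hψpos s ⟨hs.1, lt_of_le_of_lt hs.2 hr₁ltr₀⟩).le (mul_nonneg hs.1.le (abs_nonneg _))
  have hωbdd : ∀ r, r ≤ r₁ → BddBelow (ω '' Set.Ioc 0 r) :=
    fun r hr => ⟨0, by rintro x ⟨s, hs, rfl⟩; exact hωnn s ⟨hs.1, hs.2.trans hr⟩⟩
  have hωne : ∀ r, 0 < r → (ω '' Set.Ioc 0 r).Nonempty :=
    fun r hr => ⟨ω r, Set.mem_image_of_mem _ ⟨hr, le_rfl⟩⟩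
  -- basic properties of ωt
  have hωtnn : ∀ r ∈ Set.Ioc (0:ℝ) r₁, 0 ≤ ωt r := by
    intro r hr
    apply Real.sInf_nonneg
    rintro x ⟨s, hs, rfl⟩
    exact hωnn s ⟨hs.1, hs.2.trans hr.2⟩
  have hωtle : ∀ r ∈ Set.Ioc (0:ℝ) r₁, ωt r ≤ ω r :=
    fun r hr => csInf_le (hωbdd r hr.2) (Set.mem_image_of_mem _ ⟨hr.1, le_rfl⟩)
  have hωtanti : AntitoneOn ωt (Set.Ioc (0:ℝ) r₁) := by
    intro a ha b hb hab
    exact csInf_le_csInf (hωbdd b hb.2) (hωne a ha.1)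
      (Set.image_mono (Set.Ioc_subset_Ioc_right hab))
  have hωtbig : ∀ M : ℝ, ∃ δ, 0 < δ ∧ δ ≤ r₁ ∧ ∀ s, 0 < s → s < δ → M ≤ ωt s := by
    intro M
    have h := hψfast.eventually (eventually_ge_atTop M)
    rw [eventually_nhdsWithin_iff] at h
    rcases Metric.eventually_nhds_iff.mp h with ⟨δ₀, hδ₀, hh⟩
    refine ⟨min δ₀ r₁, lt_min hδ₀ hr₁pos, min_le_right _ _, fun s hs hsδ => ?_⟩
    apply le_csInf (hωne s hs)
    rintro x ⟨u, hu, rfl⟩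
    have hud : dist u 0 < δ₀ := by
      rw [Real.dist_eq, sub_zero, abs_of_pos hu.1]
      exact lt_of_le_of_lt hu.2 (lt_of_lt_of_le hsδ (min_le_left _ _))
    exact hh hud hu.1
  -- basic properties of f
  have hfnn : ∀ s, 0 ≤ f s := fun s =>
    le_min (le_trans zero_le_one (le_max_right _ _)) (le_max_right _ _)
  have hgnn : ∀ s, 0 ≤ g s := fun s => mul_nonneg (by positivity) (hfnn s)
  have hfle_log : ∀ s ∈ Set.Ioc (0:ℝ) r₁, f s ≤ -Real.log s := by
    intro s hs
    have : max (-Real.log s) 0 = -Real.log s :=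
      max_eq_left (by simpa using Real.log_nonpos hs.1.le (hs.2.trans hr₁lt1.le))
    exact le_trans (min_le_right _ _) (le_of_eq this)
  have hfle_max : ∀ s, f s ≤ max (ωt s) 1 := fun s => min_le_left _ _
  set c : ℝ := min 1 (-Real.log r₁) with hc
  have hcpos : 0 < c := lt_min one_pos (by simpa using Real.log_neg hr₁pos hr₁lt1)
  have hc1 : c ≤ 1 := min_le_left _ _
  have hflb : ∀ s ∈ Set.Ioc (0:ℝ) r₁, c ≤ f s := by
    intro s hs
    refine le_min (le_trans hc1 (le_max_right _ _)) (le_trans ?_ (le_max_left _ _))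
    exact le_trans (min_le_right _ _) (by simpa using Real.log_le_log hs.1 hs.2)
  have hfanti : AntitoneOn f (Set.Ioc (0:ℝ) r₁) := by
    intro a ha b hb hab
    exact min_le_min (max_le_max (hωtanti ha hb hab) le_rfl)
      (max_le_max (neg_le_neg (Real.log_le_log ha.1 hab)) le_rfl)
  -- basic properties of H
  have hgbdd : ∀ (s : Set ℝ), BddBelow (g '' s) :=
    fun s => ⟨0, by rintro x ⟨u, _, rfl⟩; exact hgnn u⟩
  have hgne : ∀ r, r ≤ r₁ → (g '' Set.Icc r r₁).Nonempty :=
    fun r hr => ⟨g r₁, Set.mem_image_of_mem _ ⟨hr, le_rfl⟩⟩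
  have HIcc : ∀ r, r ≤ r₁ → H r = sInf (g '' Set.Icc r r₁) := by
    intro r hr
    rw [hH]
    simp only [min_eq_left hr]
  have Hmono : Monotone H := by
    intro a b hab
    apply csInf_le_csInf (hgbdd _) (hgne _ (min_le_right _ _))
    exact Set.image_mono (Set.Icc_subset_Icc_left (min_le_min hab le_rfl))
  have Hub : ∀ r ∈ Set.Ioc (0:ℝ) r₁, H r ≤ g r := by
    intro r hr
    rw [HIcc r hr.2]
    exact csInf_le (hgbdd _) (Set.mem_image_of_mem _ ⟨le_rfl, hr.2⟩)
  have Hlb : ∀ r ∈ Set.Ioc (0:ℝ) r₁, r ^ 2 * c ≤ H r := by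
    intro r hr
    rw [HIcc r hr.2]
    apply le_csInf (hgne _ hr.2)
    rintro x ⟨s, hs, rfl⟩
    have hs0 : 0 < s := lt_of_lt_of_le hr.1 hs.1
    have h1 : c ≤ f s := hflb s ⟨hs0, hs.2⟩
    have h2 : r ^ 2 ≤ s ^ 2 := by nlinarith [hr.1, hs.1]
    calc r ^ 2 * c ≤ s ^ 2 * c := by nlinarith
    _ ≤ s ^ 2 * f s := by nlinarith
  -- properties of θ
  have hθlb : ∀ r ∈ Set.Ioc (0:ℝ) r₁, c ≤ θ r := by
    intro r hr
    rw [hθ]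
    rw [le_div_iff₀ (pow_pos hr.1 2)]
    calc c * r ^ 2 = r ^ 2 * c := by ring
    _ ≤ H r := Hlb r hr
  have hθnn : ∀ r ∈ Set.Ioc (0:ℝ) r₁, 0 ≤ θ r := fun r hr => le_trans hcpos.le (hθlb r hr)
  have hθub : ∀ r ∈ Set.Ioc (0:ℝ) r₁, θ r ≤ f r := by
    intro r hr
    rw [hθ]
    rw [div_le_iff₀ (pow_pos hr.1 2)]
    calc H r ≤ g r := Hub r hr
    _ = f r * r ^ 2 := by rw [hg]; ring
  have hθeq : ∀ x : ℝ, x ≠ 0 → x ^ 2 * θ x = H x := by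
    intro x hx
    rw [hθ]
    field_simp
  have hθanti : AntitoneOn θ (Set.Ioc (0:ℝ) r₁) := by
    intro a ha b hb hab
    have key : θ b * a ^ 2 ≤ H a := by
      rw [HIcc a ha.2]
      apply le_csInf (hgne _ ha.2)
      rintro x ⟨s, hs, rfl⟩
      have hs0 : 0 < s := lt_of_lt_of_le ha.1 hs.1
      by_cases hsb : b ≤ s
      · have h1 : H b ≤ g s := by
          rw [HIcc b hb.2]
          exact csInf_le (hgbdd _) (Set.mem_image_of_mem _ ⟨hsb, hs.2⟩)
        have h2 : θ b * a ^ 2 ≤ θ b * b ^ 2 :=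
          mul_le_mul_of_nonneg_left (pow_le_pow_left₀ ha.1.le hab 2) (hθnn b hb)
        have h3 : θ b * b ^ 2 = H b := by rw [mul_comm]; exact hθeq b hb.1.ne'
        calc θ b * a ^ 2 ≤ θ b * b ^ 2 := h2
        _ = H b := h3
        _ ≤ g s := h1
      · push_neg at hsb
        have h1 : θ b ≤ f s := le_trans (hθub b hb) (hfanti ⟨hs0, hs.2⟩ hb hsb.le)
        have h2 : a ^ 2 ≤ s ^ 2 := by nlinarith [ha.1, hs.1]
        have h3 := mul_le_mul h1 h2 (by positivity) (hfnn s)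
        show θ b * a ^ 2 ≤ s ^ 2 * f s
        linarith [h3]
    rw [hθ]
    rw [le_div_iff₀ (pow_pos ha.1 2)]
    exact key
  have hθmeas : Measurable θ := by
    rw [hθ]
    exact Hmono.measurable.div (measurable_id.pow_const 2)
  -- the integrand
  have hφeq : ∀ s : ℝ, s ≠ 0 → (s ^ 2 * θ s) / s ^ 2 = θ s := by
    intro s hs
    rw [mul_comm, mul_div_assoc, div_self (pow_ne_zero 2 hs), mul_one]
  have hφmeas : Measurable (fun s => (s ^ 2 * θ s) / s ^ 2) :=
    ((measurable_id.pow_const 2).mul hθmeas).div (measurable_id.pow_const 2)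
  -- Dini condition
  have hDini : IntervalIntegrable (fun s => (s ^ 2 * θ s) / s ^ 2) volume 0 r₁ := by
    rw [intervalIntegrable_iff_integrableOn_Ioc_of_le hr₁pos.le]
    apply Integrable.mono'
      ((intervalIntegrable_iff_integrableOn_Ioc_of_le hr₁pos.le).mp
        (neg_log_integrable_and_value hr₁pos hr₁lt1.le).1)
      hφmeas.aestronglyMeasurable.restrict
    rw [ae_restrict_iff' measurableSet_Ioc]
    filter_upwards with s hs
    rw [hφeq s hs.1.ne', Real.norm_eq_abs, abs_of_nonneg (hθnn s hs)]
    exact le_trans (hθub s hs) (hfle_log s hs)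
  -- θ tends to infinity
  have hθtop : Tendsto θ (nhdsWithin 0 (Set.Ioi 0)) atTop := by
    rw [tendsto_atTop]
    intro M
    set M' : ℝ := max M 1 with hM'
    have hM'1 : 1 ≤ M' := le_max_right _ _
    have hM'pos : 0 < M' := lt_of_lt_of_le one_pos hM'1
    obtain ⟨δ₀, hδ₀pos, hδ₀le, hδ₀⟩ := hωtbig M'
    set δ : ℝ := min δ₀ (Real.exp (-M')) with hδdef
    have hδpos : 0 < δ := lt_min hδ₀pos (Real.exp_pos _)
    have hδle : δ ≤ r₁ := le_trans (min_le_left _ _) hδ₀le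
    have hfM : ∀ s, 0 < s → s < δ → M' ≤ f s := by
      intro s hs hsδ
      refine le_min (le_trans (hδ₀ s hs (lt_of_lt_of_le hsδ (le_trans (min_le_left _ _) le_rfl)))
        (le_max_left _ _)) (le_trans ?_ (le_max_left _ _))
      have : Real.log s < -M' := by
        calc Real.log s < Real.log (Real.exp (-M')) :=
          Real.log_lt_log hs (lt_of_lt_of_le hsδ (min_le_right _ _))
        _ = -M' := Real.log_exp _
      linarith
    set δ₂ : ℝ := min δ (δ * c / M') with hδ₂def
    have hδ₂pos : 0 < δ₂ := lt_min hδpos (by positivity)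
    filter_upwards [Ioo_mem_nhdsGT hδ₂pos] with r hr
    have hr0 : 0 < r := hr.1
    have hrδ : r < δ := lt_of_lt_of_le hr.2 (min_le_left _ _)
    have hrr₁ : r ≤ r₁ := le_trans hrδ.le hδle
    have hkey : M' * r ^ 2 ≤ H r := by
      rw [HIcc r hrr₁]
      apply le_csInf (hgne _ hrr₁)
      rintro x ⟨s, hs, rfl⟩
      have hs0 : 0 < s := lt_of_lt_of_le hr0 hs.1
      show M' * r ^ 2 ≤ s ^ 2 * f s
      by_cases hsδ : s < δ
      · have h1 : M' ≤ f s := hfM s hs0 hsδ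
        calc M' * r ^ 2 ≤ M' * s ^ 2 :=
              mul_le_mul_of_nonneg_left (pow_le_pow_left₀ hr0.le hs.1 2) hM'pos.le
        _ ≤ f s * s ^ 2 := mul_le_mul_of_nonneg_right h1 (sq_nonneg s)
        _ = s ^ 2 * f s := mul_comm _ _
      · push_neg at hsδ
        have h1 : c ≤ f s := hflb s ⟨hs0, hs.2⟩
        have h2 : r ≤ δ * c / M' := le_trans hr.2.le (min_le_right _ _)
        have e1 : M' * (δ * c / M') ^ 2 = δ ^ 2 * c * (c / M') := by
          field_simp
        have e2 : c / M' ≤ 1 := div_le_one_of_le₀ (le_trans hc1 hM'1) hM'pos.le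
        calc M' * r ^ 2 ≤ M' * (δ * c / M') ^ 2 :=
              mul_le_mul_of_nonneg_left (pow_le_pow_left₀ hr0.le h2 2) hM'pos.le
        _ = δ ^ 2 * c * (c / M') := e1
        _ ≤ δ ^ 2 * c * 1 := mul_le_mul_of_nonneg_left e2
              (mul_nonneg (sq_nonneg δ) hcpos.le)
        _ = δ ^ 2 * c := mul_one _
        _ ≤ s ^ 2 * c := mul_le_mul_of_nonneg_right (pow_le_pow_left₀ hδpos.le hsδ 2) hcpos.le
        _ ≤ s ^ 2 * f s := mul_le_mul_of_nonneg_left h1 (sq_nonneg s)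
    have : M' ≤ θ r := by
      rw [hθ, le_div_iff₀ (pow_pos hr0 2)]
      linarith
    exact le_trans (le_max_left _ _) this
  -- assemble
  refine ⟨r₁, θ, hr₁pos, hr₁ltr₀.le, ?_, hθanti.mono Set.Ioo_subset_Ioc_self, hθtop, ?_, hDini, 6, ?_⟩
  · intro r hr
    exact lt_of_lt_of_le hcpos (hθlb r ⟨hr.1, hr.2.le⟩)
  · -- monotonicity of r² θ r
    intro a ha b hb hab
    simp only
    rw [hθeq a ha.1.ne', hθeq b hb.1.ne']
    exact Hmono hab
  · -- the big-O bound
    set δ' : ℝ := min (r₁ / 2) (Real.exp (-1)) with hδ'def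
    have hδ'pos : 0 < δ' := lt_min (by linarith) (Real.exp_pos _)
    filter_upwards [Ioo_mem_nhdsGT hδ'pos,
      hψfast.eventually (eventually_ge_atTop 1)] with r hr hωr
    have hr0 : 0 < r := hr.1
    have hrhalf : r < r₁ / 2 := lt_of_lt_of_le hr.2 (min_le_left _ _)
    have hrexp : r < Real.exp (-1) := lt_of_lt_of_le hr.2 (min_le_right _ _)
    have hrr₁ : r < r₁ := by linarith
    have hlogneg : Real.log r < 0 := Real.log_neg hr0 (by
      calc r < Real.exp (-1) := hrexp
      _ < 1 := by rw [Real.exp_lt_one_iff]; norm_num)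
    set lr : ℝ := -Real.log r with hlr
    have hlrpos : 0 < lr := by rw [hlr]; linarith
    have hlr1 : 1 ≤ lr := by
      rw [hlr]
      have : Real.log r < -1 := by
        calc Real.log r < Real.log (Real.exp (-1)) := Real.log_lt_log hr0 hrexp
        _ = -1 := Real.log_exp _
      linarith
    have habs : |Real.log r| = lr := by rw [hlr, abs_of_neg hlogneg]
    have hψr : r * lr ≤ ψ r := by
      have := (le_div_iff₀ (by rw [habs]; positivity)).mp hωr
      rw [habs] at this
      linarith
    -- the first integral
    have h2rpos : 0 < 2 * r := by linarith
    have h2rr₁ : 2 * r ≤ r₁ := by linarith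
    have h2r1 : 2 * r ≤ 1 := by linarith [hr₁half]
    have hAint : IntervalIntegrable (fun s => (s ^ 2 * θ s) / s ^ 2) volume 0 (2 * r) := by
      apply hDini.mono_set
      rw [Set.uIcc_of_le h2rpos.le, Set.uIcc_of_le hr₁pos.le]
      exact Set.Icc_subset_Icc le_rfl h2rr₁
    obtain ⟨hLint, hLval⟩ := neg_log_integrable_and_value h2rpos h2r1
    have hA1 : (∫ s in (0:ℝ)..(2*r), (s ^ 2 * θ s) / s ^ 2) ≤ ∫ s in (0:ℝ)..(2*r), -Real.log s := by
      apply intervalIntegral.integral_mono_on h2rpos.le hAint hLint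
      intro x hx
      rcases eq_or_lt_of_le hx.1 with h | h
      · rw [← h]; simp
      · rw [hφeq x h.ne']
        exact le_trans (hθub x ⟨h, hx.2.trans h2rr₁⟩) (hfle_log x ⟨h, hx.2.trans h2rr₁⟩)
    have hA2 : (∫ s in (0:ℝ)..(2*r), -Real.log s) ≤ 4 * (r * lr) := by
      rw [hLval, Real.log_mul two_ne_zero hr0.ne']
      have hlog2 : 0 ≤ Real.log 2 := Real.log_nonneg one_le_two
      have h1 : 1 - Real.log 2 ≤ lr := by linarith
      have h2 : r * (1 - Real.log 2) ≤ r * lr := mul_le_mul_of_nonneg_left h1 hr0.le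
      have h3 : Real.log r = -lr := by rw [hlr]; ring
      rw [h3]
      linarith [h2]
    -- the second integral
    have hBcongr : (∫ s in r..r₁, (s ^ 2 * θ s) / s ^ 3) = ∫ s in r..r₁, θ s / s := by
      apply intervalIntegral.integral_congr
      intro x hx
      rw [Set.uIcc_of_le hrr₁.le] at hx
      have hx0 : 0 < x := lt_of_lt_of_le hr0 hx.1
      show (x ^ 2 * θ x) / x ^ 3 = θ x / x
      have hx3 : x ^ 3 = x ^ 2 * x := by ring
      rw [hx3, mul_div_mul_left _ _ (pow_ne_zero 2 hx0.ne')]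
    set W : ℝ := max (ωt r) 1 with hW
    have hWnn : 0 ≤ W := le_trans zero_le_one (le_max_right _ _)
    have hBint1 : IntervalIntegrable (fun s => θ s / s) volume r r₁ := by
      apply AntitoneOn.intervalIntegrable
      rw [Set.uIcc_of_le hrr₁.le]
      intro a ha b hb hab
      have ha' : a ∈ Set.Ioc (0:ℝ) r₁ := ⟨lt_of_lt_of_le hr0 ha.1, ha.2⟩
      have hb' : b ∈ Set.Ioc (0:ℝ) r₁ := ⟨lt_of_lt_of_le hr0 hb.1, hb.2⟩
      exact div_le_div₀ (hθnn a ha') (hθanti ha' hb' hab) (lt_of_lt_of_le hr0 ha.1) hab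
    have hBint2 : IntervalIntegrable (fun s => W / s) volume r r₁ := by
      apply ContinuousOn.intervalIntegrable
      apply continuousOn_const.div continuousOn_id
      intro x hx
      rw [Set.uIcc_of_le hrr₁.le] at hx
      exact (lt_of_lt_of_le hr0 hx.1).ne'
    have hB1 : (∫ s in r..r₁, θ s / s) ≤ ∫ s in r..r₁, W / s := by
      apply intervalIntegral.integral_mono_on hrr₁.le hBint1 hBint2
      intro x hx
      have hx0 : 0 < x := lt_of_lt_of_le hr0 hx.1
      have hx' : x ∈ Set.Ioc (0:ℝ) r₁ := ⟨hx0, hx.2⟩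
      have hθW : θ x ≤ W := by
        refine le_trans (hθub x hx') (le_trans (hfle_max x) ?_)
        exact max_le_max (hωtanti ⟨hr0, hrr₁.le⟩ hx' hx.1) le_rfl
      exact (div_le_div_iff_of_pos_right hx0).mpr hθW
    have hB2 : (∫ s in r..r₁, W / s) = W * Real.log (r₁ / r) := by
      have he : (fun s : ℝ => W / s) = fun s => W * s⁻¹ := by
        funext s
        rw [div_eq_mul_inv]
      rw [he, intervalIntegral.integral_const_mul, integral_inv]
      intro hmem
      rw [Set.mem_uIcc] at hmem
      rcases hmem with ⟨h1, _⟩ | ⟨h1, _⟩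
      · exact absurd h1 (not_le.mpr hr0)
      · exact absurd h1 (not_le.mpr hr₁pos)
    have hB3 : W * Real.log (r₁ / r) ≤ W * lr := by
      apply mul_le_mul_of_nonneg_left _ hWnn
      rw [Real.log_div hr₁pos.ne' hr0.ne', hlr]
      have : Real.log r₁ ≤ 0 := Real.log_nonpos hr₁pos.le hr₁lt1.le
      linarith
    have hB4 : r * (W * lr) ≤ 2 * ψ r := by
      have hωtr : ωt r * (r * lr) ≤ ψ r := by
        have h1 : ωt r ≤ ψ r / (r * lr) := by
          calc ωt r ≤ ω r := hωtle r ⟨hr0, hrr₁.le⟩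
          _ = ψ r / (r * lr) := by
              show ψ r / (r * |Real.log r|) = ψ r / (r * lr)
              rw [habs]
        exact (le_div_iff₀ (mul_pos hr0 hlrpos)).mp h1
      have hWle : W ≤ ωt r + 1 := by
        apply max_le
        · linarith
        · have := hωtnn r ⟨hr0, hrr₁.le⟩
          linarith
      have h2 : r * (W * lr) ≤ r * ((ωt r + 1) * lr) := by
        apply mul_le_mul_of_nonneg_left _ hr0.le
        exact mul_le_mul_of_nonneg_right hWle hlrpos.le
      have h3 : r * ((ωt r + 1) * lr) = ωt r * (r * lr) + r * lr := by ring
      linarith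
    -- assemble
    have hBfinal : r * (∫ s in r..r₁, (s ^ 2 * θ s) / s ^ 3) ≤ 2 * ψ r := by
      rw [hBcongr]
      calc r * (∫ s in r..r₁, θ s / s) ≤ r * (W * lr) := by
            apply mul_le_mul_of_nonneg_left _ hr0.le
            calc (∫ s in r..r₁, θ s / s) ≤ ∫ s in r..r₁, W / s := hB1
            _ = W * Real.log (r₁ / r) := hB2
            _ ≤ W * lr := hB3
      _ ≤ 2 * ψ r := hB4
    have hAfinal : (∫ s in (0:ℝ)..(2*r), (s ^ 2 * θ s) / s ^ 2) ≤ 4 * ψ r := by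
      calc (∫ s in (0:ℝ)..(2*r), (s ^ 2 * θ s) / s ^ 2) ≤ 4 * (r * lr) := le_trans hA1 hA2
      _ ≤ 4 * ψ r := by linarith
    linarith
end

section
/- For k ≥ 2 let Σ^{(k)} = (3/k)ℤ² ∩ closed disk of radius 1 − 1/k centered at 0 (identifying ℝ² with ℂ), and let ν_k be the probability measure ν_k = (1/#Σ^{(k)}) Σ_{σ ∈ Σ^{(k)}} (uniform probability measure on the circle ∂D(σ, 1/k)). Then there exists a universal constant C such that ν_k(D(z,r)) ≤ C·r for every z ∈ ℂ, every r > 0, and every k ≥ 2. -/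
open Metric MeasureTheory Real
open scoped Classical ENNReal

/-- The uniform probability measure on the circle of center `c` and radius `R`. -/
noncomputable def circleUniform (c : ℂ) (R : ℝ) : Measure ℂ :=
  Measure.map (circleMap c R)
    ((ENNReal.ofReal (2 * π))⁻¹ • volume.restrict (Set.Ioc (0:ℝ) (2 * π)))

/-- The lattice point of `(3/k)ℤ²` indexed by `p`. -/
noncomputable def latticePoint (k : ℕ) (p : ℤ × ℤ) : ℂ :=
  ((3 / (k:ℝ) : ℝ) : ℂ) * ((p.1 : ℂ) + (p.2 : ℂ) * Complex.I)

/-- The index set `Σ^{(k)}`: lattice points of `(3/k)ℤ²` in the closed disk of radius `1 - 1/k`. -/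
noncomputable def latticeSet (k : ℕ) : Finset (ℤ × ℤ) :=
  (Finset.Icc (-(k:ℤ), -(k:ℤ)) ((k:ℤ), (k:ℤ))).filter
    (fun p => ‖latticePoint k p‖ ≤ 1 - 1/(k:ℝ))

/-- The probability measure `ν_k` equidistributed on the circles `∂D(σ, 1/k)`, `σ ∈ Σ^{(k)}`. -/
noncomputable def nuMeasure (k : ℕ) : Measure ℂ :=
  (((latticeSet k).card : ℝ≥0∞))⁻¹ •
    ∑ p ∈ latticeSet k, circleUniform (latticePoint k p) (1/(k:ℝ))

/-! ### Auxiliary lemmas -/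

lemma abs_exp_I_sub_one_ge (t : ℝ) (ht : |t| ≤ π) :
    2 / π * |t| ≤ ‖Complex.exp (t * Complex.I) - 1‖ := by
  have hπ : (0:ℝ) < π := Real.pi_pos
  have hsq : ‖Complex.exp (t * Complex.I) - 1‖ ^ 2 = 2 - 2 * Real.cos t := by
    rw [Complex.sq_norm, Complex.normSq_apply, Complex.exp_mul_I]
    simp [Complex.add_re, Complex.add_im, Complex.cos_ofReal_re, Complex.sin_ofReal_re]
    nlinarith [Real.sin_sq_add_cos_sq t]
  have hcos : Real.cos t = 1 - 2 * Real.sin (t/2)^2 := by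
    have := Real.cos_two_mul (t/2)
    have h2 := Real.sin_sq_add_cos_sq (t/2)
    rw [show 2*(t/2) = t by ring] at this
    nlinarith
  have hsin : |t| / π ≤ |Real.sin (t/2)| := by
    have h1 : Real.sin (|t|/2) = |Real.sin (t/2)| := by
      rcases abs_cases t with ⟨h, _⟩ | ⟨h, hneg⟩
      · rw [h, abs_of_nonneg]
        apply Real.sin_nonneg_of_nonneg_of_le_pi <;> nlinarith [abs_nonneg t, ht]
      · rw [h, show -t/2 = -(t/2) by ring, Real.sin_neg, abs_of_nonpos]
        apply Real.sin_nonpos_of_nonpos_of_neg_pi_le <;> nlinarith [ht, neg_abs_le t]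
    rw [← h1]
    have := Real.mul_le_sin (x := |t|/2) (by positivity) (by linarith)
    calc |t|/π = 2/π * (|t|/2) := by field_simp
    _ ≤ _ := this
  have habs : 0 ≤ ‖Complex.exp (t * Complex.I) - 1‖ := norm_nonneg _
  have hA : ‖Complex.exp (t * Complex.I) - 1‖ = 2 * |Real.sin (t/2)| := by
    have h4 : ‖Complex.exp (t * Complex.I) - 1‖ ^ 2 = (2 * |Real.sin (t/2)|) ^ 2 := by
      rw [hsq]; nlinarith [sq_abs (Real.sin (t/2))]
    have h5 := Real.sqrt_sq habs
    rw [h4, Real.sqrt_sq (by positivity)] at h5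
    exact h5.symm
  rw [hA]
  rw [div_mul_eq_mul_div, mul_comm, ← div_mul_eq_mul_div] at *
  nlinarith [hsin]

lemma dist_circleMap_ge (c : ℂ) (R : ℝ) (hR : 0 ≤ R) {x y : ℝ} (h : |x - y| ≤ π) :
    2 / π * R * |x - y| ≤ dist (circleMap c R x) (circleMap c R y) := by
  have hfac : circleMap c R x - circleMap c R y
      = (R : ℂ) * Complex.exp (y * Complex.I) * (Complex.exp ((x - y : ℝ) * Complex.I) - 1) := by
    simp only [circleMap]
    rw [show ((x - y : ℝ) : ℂ) = (x : ℂ) - (y : ℂ) by push_cast; ring]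
    rw [sub_mul, Complex.exp_sub]
    field_simp [Complex.exp_ne_zero]
    ring
  rw [Complex.dist_eq, hfac]
  rw [norm_mul, norm_mul, Complex.norm_real, Real.norm_eq_abs, Complex.norm_exp_ofReal_mul_I,
    abs_of_nonneg hR, mul_one]
  have := abs_exp_I_sub_one_ge (x - y) h
  have h2 : (0:ℝ) ≤ 2 / π * |x - y| := by positivity
  calc 2 / π * R * |x - y| = R * (2 / π * |x - y|) := by ring
  _ ≤ R * ‖Complex.exp ((x - y : ℝ) * Complex.I) - 1‖ :=
      mul_le_mul_of_nonneg_left this hR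

lemma circleUniform_ball_le (c z : ℂ) {R r : ℝ} (hR : 0 < R) (hr : 0 < r) :
    circleUniform c R (ball z r) ≤ ENNReal.ofReal (r / R) := by
  have hπ : (0:ℝ) < π := Real.pi_pos
  have hmeas : MeasurableSet (circleMap c R ⁻¹' ball z r) :=
    (continuous_circleMap c R).measurable measurableSet_ball
  rw [circleUniform, Measure.map_apply (continuous_circleMap c R).measurable measurableSet_ball,
    Measure.smul_apply, Measure.restrict_apply hmeas, smul_eq_mul]
  set P := circleMap c R ⁻¹' ball z r with hP
  have key : ∀ a : ℝ, volume (P ∩ Set.Icc a (a + π)) ≤ ENNReal.ofReal (π * (r / R)) := by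
    intro a
    refine (Real.volume_le_diam _).trans ?_
    refine EMetric.diam_le fun x hx y hy => ?_
    rw [edist_dist, Real.dist_eq]
    apply ENNReal.ofReal_le_ofReal
    have hxy : |x - y| ≤ π := by
      rcases hx.2 with ⟨hx1, hx2⟩; rcases hy.2 with ⟨hy1, hy2⟩
      rw [abs_sub_le_iff]; constructor <;> linarith
    have hd : dist (circleMap c R x) (circleMap c R y) < 2 * r := by
      have h1 : circleMap c R x ∈ ball z r := hx.1
      have h2 : circleMap c R y ∈ ball z r := hy.1
      rw [mem_ball] at h1 h2
      calc dist (circleMap c R x) (circleMap c R y)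
          ≤ dist (circleMap c R x) z + dist z (circleMap c R y) := dist_triangle _ _ _
        _ < 2 * r := by rw [dist_comm z]; linarith
    have h5 : 2 / π * R * |x - y| < 2 * r :=
      lt_of_le_of_lt (dist_circleMap_ge c R hR.le hxy) hd
    have h4 : R * |x - y| < π * r := by
      have h6 := mul_lt_mul_of_pos_left h5 (by positivity : (0:ℝ) < π/2)
      calc R * |x - y| = π/2 * (2/π*R*|x - y|) := by field_simp
      _ < π/2 * (2*r) := h6
      _ = π * r := by ring
    rw [show π*(r/R) = (π*r)/R by ring, le_div_iff₀ hR]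
    nlinarith [h4]
  have hsub : P ∩ Set.Ioc 0 (2*π) ⊆ (P ∩ Set.Icc 0 (0+π)) ∪ (P ∩ Set.Icc π (π+π)) := by
    rintro x ⟨hp, h1, h2⟩
    rcases le_total x π with h | h
    · exact Or.inl ⟨hp, by constructor <;> linarith⟩
    · exact Or.inr ⟨hp, by constructor <;> linarith⟩
  have hv : volume (P ∩ Set.Ioc 0 (2*π)) ≤ ENNReal.ofReal (2*π*(r/R)) := by
    refine (measure_mono hsub).trans ?_
    refine (measure_union_le _ _).trans ?_
    refine (add_le_add (key 0) (key π)).trans ?_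
    rw [← ENNReal.ofReal_add (by positivity) (by positivity)]
    exact ENNReal.ofReal_le_ofReal (by linarith)
  calc (ENNReal.ofReal (2*π))⁻¹ * volume (P ∩ Set.Ioc 0 (2*π))
      ≤ (ENNReal.ofReal (2*π))⁻¹ * ENNReal.ofReal (2*π*(r/R)) := mul_le_mul_right hv _
  _ = ENNReal.ofReal (r/R) := by
      rw [ENNReal.ofReal_mul (by positivity : (0:ℝ) ≤ 2*π), ← mul_assoc,
        ENNReal.inv_mul_cancel (ENNReal.ofReal_pos.mpr (by positivity)).ne'
          ENNReal.ofReal_ne_top, one_mul]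

lemma circleUniform_univ (c : ℂ) (R : ℝ) : circleUniform c R Set.univ = 1 := by
  have hπ : (0:ℝ) < π := Real.pi_pos
  rw [circleUniform, Measure.map_apply (continuous_circleMap c R).measurable MeasurableSet.univ,
    Set.preimage_univ, Measure.smul_apply, Measure.restrict_apply MeasurableSet.univ,
    Set.univ_inter, Real.volume_Ioc, smul_eq_mul, sub_zero,
    ENNReal.inv_mul_cancel (ENNReal.ofReal_pos.mpr (by positivity)).ne' ENNReal.ofReal_ne_top]

lemma circleUniform_le_one (c : ℂ) (R : ℝ) (s : Set ℂ) : circleUniform c R s ≤ 1 := by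
  rw [← circleUniform_univ c R]; exact measure_mono (Set.subset_univ s)

lemma circleUniform_ball_zero (c z : ℂ) {R r : ℝ} (hR : 0 ≤ R)
    (h : r + R ≤ dist c z) : circleUniform c R (ball z r) = 0 := by
  rw [circleUniform, Measure.map_apply (continuous_circleMap c R).measurable measurableSet_ball]
  have : circleMap c R ⁻¹' ball z r = ∅ := by
    ext θ
    simp only [Set.mem_preimage, mem_ball, Set.mem_empty_iff_false, iff_false, not_lt]
    have hs := circleMap_mem_sphere c hR θ
    rw [mem_sphere] at hs
    have := dist_triangle c (circleMap c R θ) z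
    rw [dist_comm c (circleMap c R θ)] at this
    linarith [dist_comm (circleMap c R θ) z ▸ this]
  rw [this]; simp

lemma latticePoint_re (k : ℕ) (p : ℤ × ℤ) : (latticePoint k p).re = 3/(k:ℝ) * p.1 := by
  simp [latticePoint]

lemma latticePoint_im (k : ℕ) (p : ℤ × ℤ) : (latticePoint k p).im = 3/(k:ℝ) * p.2 := by
  simp [latticePoint]

lemma int_Icc_card_le (x L : ℝ) (hL : 0 ≤ L) :
    ((Finset.Icc ⌈x - L⌉ ⌊x + L⌋).card : ℝ) ≤ 2*L + 1 := by
  rw [Int.card_Icc]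
  rcases le_or_gt (⌊x + L⌋ + 1 - ⌈x - L⌉) 0 with h | h
  · rw [Int.toNat_of_nonpos h]; push_cast; linarith
  · have hcast : (((⌊x + L⌋ + 1 - ⌈x - L⌉).toNat : ℕ) : ℝ)
        = ((⌊x + L⌋:ℝ) + 1 - (⌈x - L⌉:ℝ)) := by
      rw [← Int.cast_natCast, Int.toNat_of_nonneg h.le]; push_cast; ring
    rw [hcast]
    have h1 := Int.floor_le (x + L)
    have h2 := Int.le_ceil (x - L)
    linarith

lemma count_relevant (k : ℕ) (hk : 2 ≤ k) (z : ℂ) (r : ℝ) (hr : 0 < r) :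
    (((latticeSet k).filter
        (fun p => dist (latticePoint k p) z < r + 1/(k:ℝ))).card : ℝ)
      ≤ (2*((k:ℝ)/3*(r + 1/(k:ℝ))) + 1)^2 := by
  have hk0 : (0:ℝ) < k := by positivity
  set L : ℝ := (k:ℝ)/3*(r + 1/(k:ℝ)) with hL
  have hLpos : 0 < L := by positivity
  set x : ℝ := (k:ℝ)/3 * z.re
  set y : ℝ := (k:ℝ)/3 * z.im
  have hsub : (latticeSet k).filter (fun p => dist (latticePoint k p) z < r + 1/(k:ℝ))
      ⊆ Finset.Icc (⌈x - L⌉, ⌈y - L⌉) (⌊x + L⌋, ⌊y + L⌋) := by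
    intro p hp
    rw [Finset.mem_filter] at hp
    have hd := hp.2
    rw [Complex.dist_eq] at hd
    have hre : |(latticePoint k p - z).re| ≤ ‖latticePoint k p - z‖ :=
      Complex.abs_re_le_norm _
    have him : |(latticePoint k p - z).im| ≤ ‖latticePoint k p - z‖ :=
      Complex.abs_im_le_norm _
    rw [Complex.sub_re, latticePoint_re] at hre
    rw [Complex.sub_im, latticePoint_im] at him
    have hre2 : |3/(k:ℝ) * p.1 - z.re| < r + 1/(k:ℝ) := lt_of_le_of_lt hre hd
    have him2 : |3/(k:ℝ) * p.2 - z.im| < r + 1/(k:ℝ) := lt_of_le_of_lt him hd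
    rw [abs_lt] at hre2 him2
    rw [Finset.mem_Icc, Prod.le_def, Prod.le_def]
    have hk' : (k:ℝ) ≠ 0 := ne_of_gt hk0
    have key : ∀ u v : ℝ, u ≤ v → (k:ℝ)/3*u ≤ (k:ℝ)/3*v := fun u v h =>
      mul_le_mul_of_nonneg_left h (by positivity)
    have e1 : x - L ≤ (p.1 : ℝ) := by
      calc x - L = (k:ℝ)/3*(z.re - (r + 1/(k:ℝ))) := by simp only [x, hL]; ring
      _ ≤ (k:ℝ)/3*((3/(k:ℝ))*p.1) := key _ _ (by linarith [hre2.1])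
      _ = (p.1:ℝ) := by field_simp
    have e2 : (p.1 : ℝ) ≤ x + L := by
      calc (p.1:ℝ) = (k:ℝ)/3*((3/(k:ℝ))*p.1) := by field_simp
      _ ≤ (k:ℝ)/3*(z.re + (r + 1/(k:ℝ))) := key _ _ (by linarith [hre2.2])
      _ = x + L := by simp only [x, hL]; ring
    have e3 : y - L ≤ (p.2 : ℝ) := by
      calc y - L = (k:ℝ)/3*(z.im - (r + 1/(k:ℝ))) := by simp only [y, hL]; ring
      _ ≤ (k:ℝ)/3*((3/(k:ℝ))*p.2) := key _ _ (by linarith [him2.1])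
      _ = (p.2:ℝ) := by field_simp
    have e4 : (p.2 : ℝ) ≤ y + L := by
      calc (p.2:ℝ) = (k:ℝ)/3*((3/(k:ℝ))*p.2) := by field_simp
      _ ≤ (k:ℝ)/3*(z.im + (r + 1/(k:ℝ))) := key _ _ (by linarith [him2.2])
      _ = y + L := by simp only [y, hL]; ring
    exact ⟨⟨Int.ceil_le.mpr e1, Int.ceil_le.mpr e3⟩, ⟨Int.le_floor.mpr e2, Int.le_floor.mpr e4⟩⟩
  have hcard := Finset.card_le_card hsub
  have hprod : (Finset.Icc (⌈x - L⌉, ⌈y - L⌉) (⌊x + L⌋, ⌊y + L⌋)).card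
      = (Finset.Icc ⌈x - L⌉ ⌊x + L⌋).card * (Finset.Icc ⌈y - L⌉ ⌊y + L⌋).card :=
    Finset.card_Icc_prod _ _
  have b1 := int_Icc_card_le x L hLpos.le
  have b2 := int_Icc_card_le y L hLpos.le
  have hc2 : (((latticeSet k).filter
      (fun p => dist (latticePoint k p) z < r + 1/(k:ℝ))).card : ℝ)
      ≤ ((Finset.Icc ⌈x - L⌉ ⌊x + L⌋).card : ℝ) * ((Finset.Icc ⌈y - L⌉ ⌊y + L⌋).card : ℝ) := by
    rw [hprod] at hcard; exact_mod_cast hcard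
  refine hc2.trans ?_
  have n1 : (0:ℝ) ≤ ((Finset.Icc ⌈x - L⌉ ⌊x + L⌋).card : ℝ) := Nat.cast_nonneg _
  have n2 : (0:ℝ) ≤ ((Finset.Icc ⌈y - L⌉ ⌊y + L⌋).card : ℝ) := Nat.cast_nonneg _
  nlinarith [b1, b2, n1, n2]

lemma latticeSet_card_ge (k : ℕ) (hk : 2 ≤ k) :
    ((k:ℝ))^2 ≤ 144 * ((latticeSet k).card : ℝ) := by
  have hk0 : (0:ℝ) < k := by positivity
  have h2k : (2:ℝ) ≤ k := by exact_mod_cast hk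
  set m : ℕ := k / 12 with hm
  have hm12 : (m:ℝ) * 12 ≤ (k:ℝ) := by exact_mod_cast Nat.div_mul_le_self k 12
  have hmlt : (k:ℝ) < 12 * ((m:ℝ) + 1) := by
    have : k < 12 * (m + 1) := by rw [hm]; omega
    exact_mod_cast this
  have hsub : Finset.Icc ((-(m:ℤ)), -(m:ℤ)) (((m:ℤ)), (m:ℤ)) ⊆ latticeSet k := by
    intro p hp
    rw [Finset.mem_Icc, Prod.le_def, Prod.le_def] at hp
    obtain ⟨⟨hl1, hl2⟩, hr1, hr2⟩ := hp
    have hmk : (m:ℤ) ≤ (k:ℤ) := by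
      have : m ≤ k := Nat.div_le_self k 12
      exact_mod_cast this
    rw [latticeSet, Finset.mem_filter, Finset.mem_Icc, Prod.le_def, Prod.le_def]
    refine ⟨⟨⟨by omega, by omega⟩, by omega, by omega⟩, ?_⟩
    have habs : ‖latticePoint k p‖ ≤ 3/(k:ℝ) * (|(p.1:ℝ)| + |(p.2:ℝ)|) := by
      rw [latticePoint, norm_mul, Complex.norm_real, Real.norm_eq_abs,
        abs_of_nonneg (by positivity : (0:ℝ) ≤ 3/(k:ℝ))]
      apply mul_le_mul_of_nonneg_left _ (by positivity : (0:ℝ) ≤ 3/(k:ℝ))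
      refine (Complex.norm_le_abs_re_add_abs_im _).trans ?_
      simp
    have hp1 : |(p.1:ℝ)| ≤ (m:ℝ) := by
      rw [abs_le]; constructor
      · exact_mod_cast hl1
      · exact_mod_cast hr1
    have hp2 : |(p.2:ℝ)| ≤ (m:ℝ) := by
      rw [abs_le]; constructor
      · exact_mod_cast hl2
      · exact_mod_cast hr2
    have hbd : 3/(k:ℝ) * ((m:ℝ) + (m:ℝ)) ≤ 1 - 1/(k:ℝ) := by
      rw [div_mul_eq_mul_div, div_le_iff₀ hk0]
      have : (1 - 1/(k:ℝ)) * k = k - 1 := by field_simp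
      rw [this]; linarith
    calc ‖latticePoint k p‖ ≤ 3/(k:ℝ) * (|(p.1:ℝ)| + |(p.2:ℝ)|) := habs
    _ ≤ 3/(k:ℝ) * ((m:ℝ) + (m:ℝ)) :=
        mul_le_mul_of_nonneg_left (by linarith) (by positivity)
    _ ≤ 1 - 1/(k:ℝ) := hbd
  have hcard : ((Finset.Icc ((-(m:ℤ)), -(m:ℤ)) (((m:ℤ)), (m:ℤ))).card : ℝ)
      = (2*(m:ℝ)+1)^2 := by
    rw [Finset.card_Icc_prod]
    simp only [Int.card_Icc]
    have h : ((m:ℤ) + 1 - (-(m:ℤ))).toNat = 2*m + 1 := by omega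
    rw [h]; push_cast; ring
  have hle := Finset.card_le_card hsub
  have hle2 : ((Finset.Icc ((-(m:ℤ)), -(m:ℤ)) (((m:ℤ)), (m:ℤ))).card : ℝ)
      ≤ ((latticeSet k).card : ℝ) := by exact_mod_cast hle
  have hle' : (2*(m:ℝ)+1)^2 ≤ ((latticeSet k).card : ℝ) := hcard ▸ hle2
  nlinarith [hle', hm12, hmlt, (Nat.cast_nonneg m : (0:ℝ) ≤ (m:ℝ))]

lemma real_final_bound (k r T : ℝ) (h2k : 2 ≤ k) (hr : 0 < r) (hr1 : r < 1)
    (hT : 0 ≤ T) (hTc : T ≤ (2*((r*k+1)/3)+1)^2) :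
    144/k^2 * (T * min (r*k) 1) ≤ 1000 * r := by
  have hk0 : (0:ℝ) < k := by linarith
  have hksq : (0:ℝ) < k^2 := by positivity
  have hspos : 0 < r*k := by positivity
  rw [div_mul_eq_mul_div, div_le_iff₀ hksq]
  rcases le_total (r*k) 1 with hcase | hcase
  · rw [min_eq_left hcase]
    have hbb : (2*((r*k+1)/3)+1)^2 ≤ (7/3)^2 := by nlinarith
    nlinarith [mul_le_mul_of_nonneg_right (hTc.trans hbb) hspos.le,
      mul_le_mul_of_nonneg_left h2k (mul_pos hr hk0).le]
  · rw [min_eq_right hcase]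
    have hbb : (2*((r*k+1)/3)+1)^2 ≤ (7/3*(r*k))^2 := by nlinarith
    have hr2 : 784 * r^2 ≤ 1000 * r := by nlinarith
    nlinarith [hTc.trans hbb, mul_le_mul_of_nonneg_right hr2 hksq.le]

/-- Uniform linear bound for the mass of disks under the measures `ν_k`:
there is a universal `C` with `ν_k(D(z,r)) ≤ C·r` for all `k ≥ 2`, `z` and `r > 0`. -/
theorem nuMeasure_ball_le_linear :
    ∃ C > 0, ∀ k : ℕ, 2 ≤ k → ∀ (z : ℂ) (r : ℝ), 0 < r →
      nuMeasure k (ball z r) ≤ ENNReal.ofReal (C * r) := by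
  refine ⟨1000, by norm_num, fun k hk z r hr => ?_⟩
  have hk0 : (0:ℝ) < k := by positivity
  have h2k : (2:ℝ) ≤ k := by exact_mod_cast hk
  have hR : (0:ℝ) < 1/(k:ℝ) := by positivity
  have hNcard := latticeSet_card_ge k hk
  have hNpos : (0:ℝ) < ((latticeSet k).card : ℝ) := by nlinarith
  rcases le_or_gt 1 r with hr1 | hr1
  · -- case r ≥ 1 : use total mass ≤ 1
    have h2 : nuMeasure k Set.univ ≤ 1 := by
      rw [nuMeasure, Measure.smul_apply, Measure.finset_sum_apply, smul_eq_mul]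
      have hsum : ∑ p ∈ latticeSet k, circleUniform (latticePoint k p) (1/(k:ℝ)) Set.univ
          = ((latticeSet k).card : ℝ≥0∞) := by
        simp [circleUniform_univ]
      rw [hsum, ENNReal.inv_mul_cancel]
      · exact Nat.cast_ne_zero.mpr (by exact_mod_cast Nat.pos_of_ne_zero (by
          intro h0; rw [h0] at hNpos; simp at hNpos) |>.ne')
      · exact ENNReal.natCast_ne_top _
    calc nuMeasure k (ball z r) ≤ nuMeasure k Set.univ := measure_mono (Set.subset_univ _)
    _ ≤ 1 := h2
    _ ≤ ENNReal.ofReal (1000 * r) := by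
        rw [← ENNReal.ofReal_one]
        exact ENNReal.ofReal_le_ofReal (by linarith)
  · -- case r < 1
    rw [nuMeasure, Measure.smul_apply, Measure.finset_sum_apply, smul_eq_mul]
    set T := (latticeSet k).filter (fun p => dist (latticePoint k p) z < r + 1/(k:ℝ)) with hT
    have hsumeq : ∑ p ∈ T, circleUniform (latticePoint k p) (1/(k:ℝ)) (ball z r)
        = ∑ p ∈ latticeSet k, circleUniform (latticePoint k p) (1/(k:ℝ)) (ball z r) := by
      refine Finset.sum_filter_of_ne fun p hp hne => ?_
      by_contra hcon
      exact hne (circleUniform_ball_zero _ z hR.le (not_lt.mp hcon))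
    have hterm : ∀ p ∈ T, circleUniform (latticePoint k p) (1/(k:ℝ)) (ball z r)
        ≤ ENNReal.ofReal (min (r*(k:ℝ)) 1) := by
      intro p _
      rcases min_cases (r*(k:ℝ)) 1 with ⟨hmin, _⟩ | ⟨hmin, _⟩
      · rw [hmin]
        have hb := circleUniform_ball_le (latticePoint k p) z hR hr
        rwa [show r/(1/(k:ℝ)) = r*(k:ℝ) by field_simp] at hb
      · rw [hmin, ENNReal.ofReal_one]
        exact circleUniform_le_one _ _ _
    have hsum_le : ∑ p ∈ T, circleUniform (latticePoint k p) (1/(k:ℝ)) (ball z r)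
        ≤ T.card • ENNReal.ofReal (min (r*(k:ℝ)) 1) :=
      Finset.sum_le_card_nsmul _ _ _ hterm
    have hsmul : T.card • ENNReal.ofReal (min (r*(k:ℝ)) 1)
        = ENNReal.ofReal ((T.card:ℝ) * min (r*(k:ℝ)) 1) := by
      rw [nsmul_eq_mul, ← ENNReal.ofReal_natCast,
        ← ENNReal.ofReal_mul (Nat.cast_nonneg T.card)]
    have hNinv : (((latticeSet k).card : ℝ≥0∞))⁻¹
        ≤ ENNReal.ofReal (144/(k:ℝ)^2) := by
      have hN : ENNReal.ofReal ((k:ℝ)^2/144) ≤ ((latticeSet k).card : ℝ≥0∞) := by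
        rw [← ENNReal.ofReal_natCast]
        exact ENNReal.ofReal_le_ofReal (by linarith)
      have h1 : (((latticeSet k).card : ℝ≥0∞))⁻¹ ≤ (ENNReal.ofReal ((k:ℝ)^2/144))⁻¹ :=
        ENNReal.inv_le_inv.mpr hN
      rwa [← ENNReal.ofReal_inv_of_pos (by positivity),
        show ((k:ℝ)^2/144)⁻¹ = 144/(k:ℝ)^2 by rw [inv_div]] at h1
    have hreal : 144/(k:ℝ)^2 * ((T.card:ℝ) * min (r*(k:ℝ)) 1) ≤ 1000 * r := by
      have hTc := count_relevant k hk z r hr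
      rw [← hT] at hTc
      have hLs : (k:ℝ)/3*(r + 1/(k:ℝ)) = (r*(k:ℝ)+1)/3 := by field_simp
      rw [hLs] at hTc
      exact real_final_bound (k:ℝ) r (T.card:ℝ) h2k hr hr1 (Nat.cast_nonneg _) hTc
    calc (((latticeSet k).card : ℝ≥0∞))⁻¹
          * ∑ p ∈ latticeSet k, circleUniform (latticePoint k p) (1/(k:ℝ)) (ball z r)
        = (((latticeSet k).card : ℝ≥0∞))⁻¹
          * ∑ p ∈ T, circleUniform (latticePoint k p) (1/(k:ℝ)) (ball z r) := by rw [hsumeq]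
      _ ≤ ENNReal.ofReal (144/(k:ℝ)^2) * ENNReal.ofReal ((T.card:ℝ) * min (r*(k:ℝ)) 1) := by
          exact mul_le_mul' hNinv (hsum_le.trans_eq hsmul)
      _ = ENNReal.ofReal (144/(k:ℝ)^2 * ((T.card:ℝ) * min (r*(k:ℝ)) 1)) :=
          (ENNReal.ofReal_mul (by positivity)).symm
      _ ≤ ENNReal.ofReal (1000 * r) := ENNReal.ofReal_le_ofReal hreal
end
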